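/- arXiv:1504.03839 — 3 statements merged into one kernel-verified Lean document; each statement's English description precedes it below -/
import Mathlib

section
/- Let G be a finite simple graph with at least one vertex and let k ≥ 4 be an even integer. Let λ_min(Q(G)) denote the least eigenvalue of the signless Laplacian matrix Q(G) = D(G) + A(G) of G. Then λ_min(Q(G)) is a signless Laplacian H-eigenvalue of the generalized power hypergraph G^{k,k/2}, and every signless Laplacian H-eigenvalue of G^{k,k/2} is at least λ_min(Q(G)); that is, the least signless Laplacian H-eigenvalue of G^{k,k/2} equals the least signless Laplacian eigenvalue of G. -/
open Finset

/-- The edge set of the generalized power hypergraph `G^{k, k/2}` (with `s = k/2`):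
each edge `{u,v}` of `G` is blown up into the `2s`-set `({u} × Fin s) ∪ ({v} × Fin s)`. -/
def powerEdges {V : Type*} [Fintype V] [DecidableEq V] (G : SimpleGraph V)
    [DecidableRel G.Adj] (s : ℕ) : Finset (Finset (V × Fin s)) :=
  (Finset.univ.filter fun p : V × V => G.Adj p.1 p.2).image
    (fun p => ({p.1} ×ˢ (Finset.univ : Finset (Fin s)))
        ∪ ({p.2} ×ˢ (Finset.univ : Finset (Fin s))))

/-- `lam` is an adjacency H-eigenvalue of the generalized power hypergraph `G^{k,s}`
(`k = 2s`) with H-eigenvector `x`. -/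
def IsAdjHEigPow {V : Type*} [Fintype V] [DecidableEq V] (G : SimpleGraph V)
    [DecidableRel G.Adj] (k s : ℕ) (lam : ℝ) (x : V × Fin s → ℝ) : Prop :=
  x ≠ 0 ∧ ∀ p : V × Fin s,
    lam * x p ^ (k - 1)
      = ∑ e ∈ (powerEdges G s).filter (fun e => p ∈ e), ∏ w ∈ e.erase p, x w

/-- `lam` is a signless Laplacian H-eigenvalue of the generalized power hypergraph
`G^{k,s}` (`k = 2s`) with H-eigenvector `x`. -/
def IsQHEigPow {V : Type*} [Fintype V] [DecidableEq V] (G : SimpleGraph V)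
    [DecidableRel G.Adj] (k s : ℕ) (lam : ℝ) (x : V × Fin s → ℝ) : Prop :=
  x ≠ 0 ∧ ∀ p : V × Fin s,
    lam * x p ^ (k - 1)
      = (((powerEdges G s).filter (fun e => p ∈ e)).card : ℝ) * x p ^ (k - 1)
        + ∑ e ∈ (powerEdges G s).filter (fun e => p ∈ e), ∏ w ∈ e.erase p, x w

section Aux

set_option linter.unusedSectionVars false

variable {V : Type*} [Fintype V] [DecidableEq V]

/-- The hyperedge obtained by blowing up the pair `{u, v}`. -/
def hedge (s : ℕ) (u v : V) : Finset (V × Fin s) :=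
  ({u} ×ˢ (Finset.univ : Finset (Fin s))) ∪ ({v} ×ˢ (Finset.univ : Finset (Fin s)))

lemma mem_hedge {s : ℕ} {u v : V} {p : V × Fin s} :
    p ∈ hedge s u v ↔ p.1 = u ∨ p.1 = v := by
  cases p; simp [hedge, eq_comm]

lemma hedge_comm {s : ℕ} (u v : V) : hedge s u v = hedge s v u :=
  union_comm _ _

lemma powerEdges_eq (G : SimpleGraph V) [DecidableRel G.Adj] (s : ℕ) :
    powerEdges G s
      = (Finset.univ.filter fun p : V × V => G.Adj p.1 p.2).image
          (fun p => hedge s p.1 p.2) := rfl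

lemma filter_powerEdges (G : SimpleGraph V) [DecidableRel G.Adj]
    {s : ℕ} (v : V) (i : Fin s) :
    (powerEdges G s).filter (fun e => (v, i) ∈ e)
      = (G.neighborFinset v).image (fun u => hedge s u v) := by
  ext e
  simp only [powerEdges_eq, mem_filter, mem_image, mem_univ, true_and,
    SimpleGraph.mem_neighborFinset]
  constructor
  · rintro ⟨⟨⟨a, b⟩, hab, rfl⟩, hp⟩
    have hab' : G.Adj a b := hab
    rcases mem_hedge.mp hp with h | h
    · have h' : v = a := h
      subst h'
      exact ⟨b, hab', hedge_comm _ _⟩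
    · have h' : v = b := h
      subst h'
      exact ⟨a, hab'.symm, rfl⟩
  · rintro ⟨u, hu, rfl⟩
    exact ⟨⟨⟨u, v⟩, hu.symm, rfl⟩, mem_hedge.mpr (Or.inr rfl)⟩

lemma hedge_injOn (G : SimpleGraph V) [DecidableRel G.Adj] {s : ℕ} (hs : 0 < s) (v : V) :
    Set.InjOn (fun u => hedge s u v) (G.neighborFinset v) := by
  intro a ha b hb hab
  have ha' : G.Adj v a := by simpa using ha
  have hab2 : hedge s a v = hedge s b v := hab
  have : ((a, ⟨0, hs⟩) : V × Fin s) ∈ hedge s b v := by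
    rw [← hab2]; exact mem_hedge.mpr (Or.inl rfl)
  rcases mem_hedge.mp this with h | h
  · exact h
  · exact absurd h ha'.ne'

lemma card_filter_powerEdges (G : SimpleGraph V) [DecidableRel G.Adj]
    {s : ℕ} (hs : 0 < s) (v : V) (i : Fin s) :
    ((powerEdges G s).filter (fun e => (v, i) ∈ e)).card = G.degree v := by
  rw [filter_powerEdges, Finset.card_image_of_injOn (hedge_injOn G hs v),
    SimpleGraph.card_neighborFinset_eq_degree]

lemma sum_filter_powerEdges (G : SimpleGraph V) [DecidableRel G.Adj]
    {s : ℕ} (hs : 0 < s) (v : V) (i : Fin s) (f : Finset (V × Fin s) → ℝ) :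
    ∑ e ∈ (powerEdges G s).filter (fun e => (v, i) ∈ e), f e
      = ∑ u ∈ G.neighborFinset v, f (hedge s u v) := by
  rw [filter_powerEdges, Finset.sum_image (fun a ha b hb h => hedge_injOn G hs v ha hb h)]

lemma prod_hedge_erase {s : ℕ} (x : V × Fin s → ℝ) {u v : V} (huv : u ≠ v) (i : Fin s) :
    ∏ w ∈ (hedge s u v).erase (v, i), x w
      = (∏ j, x (u, j)) * ∏ j ∈ Finset.univ.erase i, x (v, j) := by
  have h1 : (({u} ×ˢ (Finset.univ : Finset (Fin s))) : Finset (V × Fin s)).erase (v, i)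
      = {u} ×ˢ Finset.univ := by
    apply Finset.erase_eq_of_notMem
    simp only [Finset.mem_product, Finset.mem_singleton, Finset.mem_univ, and_true]
    exact fun h => huv h.symm
  have h2 : (({v} ×ˢ (Finset.univ : Finset (Fin s))) : Finset (V × Fin s)).erase (v, i)
      = {v} ×ˢ (Finset.univ.erase i) := by
    ext ⟨a, b⟩
    simp only [Finset.mem_erase, Finset.mem_product, Finset.mem_singleton, Finset.mem_univ,
      and_true, Prod.mk.injEq, not_and]
    constructor
    · rintro ⟨h, rfl⟩
      exact ⟨rfl, by simpa using h⟩
    · rintro ⟨rfl, hb⟩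
      refine ⟨?_, rfl⟩
      simpa using hb
  have hdisj : Disjoint ((({u} ×ˢ (Finset.univ : Finset (Fin s))) : Finset (V × Fin s)).erase (v,i))
      ((({v} ×ˢ (Finset.univ : Finset (Fin s))) : Finset (V × Fin s)).erase (v, i)) := by
    rw [h1, h2]
    simp only [Finset.disjoint_left]
    rintro ⟨a, b⟩ ha hb
    simp only [Finset.mem_product, Finset.mem_singleton] at ha hb
    exact huv (ha.1.symm ▸ hb.1 ▸ rfl : u = v)
  rw [hedge, Finset.erase_union_distrib, Finset.prod_union hdisj, h1, h2,
    Finset.singleton_product, Finset.singleton_product, Finset.prod_map, Finset.prod_map]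
  rfl

lemma mulVecQ (G : SimpleGraph V) [DecidableRel G.Adj]
    (y : V → ℝ) (v : V) :
    (Matrix.of fun u w : V =>
        (if u = w then (G.degree u : ℝ) else 0)
          + (if G.Adj u w then (1 : ℝ) else 0)).mulVec y v
      = (G.degree v : ℝ) * y v + ∑ u ∈ G.neighborFinset v, y u := by
  simp only [Matrix.mulVec, dotProduct, Matrix.of_apply, add_mul,
    Finset.sum_add_distrib, ite_mul, zero_mul, one_mul]
  congr 1
  · rw [Finset.sum_ite_eq]
    simp
  · rw [SimpleGraph.neighborFinset_eq_filter, Finset.sum_filter]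

lemma real_sign_mul_abs (r : ℝ) : Real.sign r * |r| = r := by
  rcases lt_trichotomy r 0 with h | h | h
  · rw [Real.sign_of_neg h, abs_of_neg h]; ring
  · simp [h]
  · rw [Real.sign_of_pos h, abs_of_pos h]; ring

end Aux

open scoped RealInnerProductSpace in
lemma rayleigh {V : Type*} [Fintype V] [DecidableEq V] (Q : Matrix V V ℝ)
    (hH : Q.IsHermitian) (lam : ℝ)
    (hLeast : ∀ μ : ℝ, (∃ y : V → ℝ, y ≠ 0 ∧ Q.mulVec y = μ • y) → lam ≤ μ)
    (z : V → ℝ) : lam * ∑ v, z v ^ 2 ≤ ∑ v, z v * Q.mulVec z v := by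
  classical
  have hQsymm : ∀ a b, Q a b = Q b a := by
    intro a b
    have := congrFun (congrFun hH a) b
    simpa [Matrix.conjTranspose_apply] using this.symm
  have hsym : ∀ x y : V → ℝ,
      ∑ v, Q.mulVec x v * y v = ∑ v, x v * Q.mulVec y v := by
    intro x y
    simp only [Matrix.mulVec, dotProduct]
    calc ∑ v, (∑ w, Q v w * x w) * y v
        = ∑ v, ∑ w, Q v w * x w * y v := by
          apply Finset.sum_congr rfl; intro v _; rw [Finset.sum_mul]
      _ = ∑ w, ∑ v, Q v w * x w * y v := Finset.sum_comm
      _ = ∑ w, x w * ∑ v, Q w v * y v := by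
          apply Finset.sum_congr rfl; intro w _
          rw [Finset.mul_sum]
          apply Finset.sum_congr rfl; intro v _
          rw [hQsymm v w]; ring
  set b := hH.eigenvectorBasis with hbdef
  have hlam : ∀ i, lam ≤ hH.eigenvalues i := by
    intro i
    exact hLeast _ ⟨b i, (WithLp.ofLp_eq_zero 2).ne.2 (b.orthonormal.ne_zero i), hH.mulVec_eigenvectorBasis i⟩
  set Z : EuclideanSpace ℝ V := WithLp.toLp 2 z with hZ
  set W : EuclideanSpace ℝ V := WithLp.toLp 2 (Q.mulVec z) with hW
  have hinner : ∀ (x y : EuclideanSpace ℝ V), ⟪x, y⟫ = ∑ v, x v * y v := by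
    intro x y
    simp [PiLp.inner_apply, RCLike.inner_apply, conj_trivial, mul_comm]
  have hrepr : ∀ i, b.repr W i = hH.eigenvalues i * b.repr Z i := by
    intro i
    rw [b.repr_apply_apply, b.repr_apply_apply, hinner, hinner]
    have h3 : ∑ v, (Q.mulVec (b i)) v * z v = ∑ v, (b i) v * Q.mulVec z v := hsym _ _
    have h4 : ∀ v, Q.mulVec (b i) v = hH.eigenvalues i * b i v := by
      intro v
      have := congrFun (hH.mulVec_eigenvectorBasis i) v
      simpa using this
    rw [← h3]
    simp only [h4, Finset.mul_sum]
    apply Finset.sum_congr rfl; intro v _; ring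
  have key1 : ∑ v, z v ^ 2 = ∑ i, (b.repr Z i) ^ 2 := by
    have e1 : ⟪Z, Z⟫ = ∑ v, z v * z v := hinner Z Z
    have e2 : ⟪b.repr Z, b.repr Z⟫ = ⟪Z, Z⟫ := b.repr.inner_map_map Z Z
    rw [hinner] at e2
    calc ∑ v, z v ^ 2 = ∑ v, z v * z v := by simp [sq]
      _ = ∑ i, b.repr Z i * b.repr Z i := by rw [← e1, ← e2]
      _ = ∑ i, (b.repr Z i) ^ 2 := by simp [sq]
  have key2 : ∑ v, z v * Q.mulVec z v = ∑ i, hH.eigenvalues i * (b.repr Z i) ^ 2 := by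
    have e1 : ⟪Z, W⟫ = ∑ v, z v * Q.mulVec z v := hinner Z W
    have e2 : ⟪b.repr Z, b.repr W⟫ = ⟪Z, W⟫ := b.repr.inner_map_map Z W
    rw [hinner] at e2
    rw [← e1, ← e2]
    apply Finset.sum_congr rfl; intro i _
    rw [hrepr i]; ring
  rw [key1, key2, Finset.mul_sum]
  apply Finset.sum_le_sum
  intro i _
  exact mul_le_mul_of_nonneg_right (hlam i) (sq_nonneg _)

/-- for a nonempty finite simple graph `G`, if `λ` is the least eigenvalue of
the signless Laplacian matrix `Q(G) = D(G) + A(G)` (it is an eigenvalue and is `≤` every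
eigenvalue), then `λ` is a signless Laplacian H-eigenvalue of `G^{k,k/2}` and every
signless Laplacian H-eigenvalue of `G^{k,k/2}` is at least `λ`; i.e. the least signless
Laplacian H-eigenvalue of `G^{k,k/2}` equals the least signless Laplacian eigenvalue of
`G`. -/
theorem stmt16 {V : Type*} [Fintype V] [DecidableEq V] [Nonempty V] (G : SimpleGraph V)
    [DecidableRel G.Adj] (k s : ℕ) (hk : 4 ≤ k) (hks : k = 2 * s)
    (Q : Matrix V V ℝ)
    (hQ : Q = Matrix.of fun u w : V =>
      (if u = w then (G.degree u : ℝ) else 0) + (if G.Adj u w then (1 : ℝ) else 0))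
    (lam : ℝ)
    (hEig : ∃ y : V → ℝ, y ≠ 0 ∧ Q.mulVec y = lam • y)
    (hLeast : ∀ μ : ℝ, (∃ y : V → ℝ, y ≠ 0 ∧ Q.mulVec y = μ • y) → lam ≤ μ) :
    (∃ x : V × Fin s → ℝ, IsQHEigPow G k s lam x) ∧
      ∀ μ : ℝ, (∃ x : V × Fin s → ℝ, IsQHEigPow G k s μ x) → lam ≤ μ := by
  have hs2 : 2 ≤ s := by omega
  have hs0 : 0 < s := by omega
  have hk1 : k - 1 = 2 * (s - 1) + 1 := by omega
  have hQH : Q.IsHermitian := by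
    subst hQ
    ext a c
    simp only [Matrix.conjTranspose_apply, Matrix.of_apply, star_trivial]
    by_cases h : a = c
    · subst h; rfl
    · rw [if_neg h, if_neg (fun hh => h hh.symm)]
      congr 1
      by_cases h2 : G.Adj a c
      · rw [if_pos h2, if_pos h2.symm]
      · rw [if_neg h2, if_neg (fun hh => h2 hh.symm)]
  have hmulQ : ∀ (z : V → ℝ) (v : V),
      Q.mulVec z v = (G.degree v : ℝ) * z v + ∑ u ∈ G.neighborFinset v, z u := by
    intro z v; rw [hQ]; exact mulVecQ G z v
  constructor
  · -- construction of the H-eigenvector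
    obtain ⟨y, hy0, hyQ⟩ := hEig
    have hgraph : ∀ v, lam * y v
        = (G.degree v : ℝ) * y v + ∑ u ∈ G.neighborFinset v, y u := by
      intro v
      have := congrFun hyQ v
      rw [hmulQ y v] at this
      simpa using this.symm
    set t : V → ℝ := fun v => |y v| ^ ((s : ℝ)⁻¹) with ht
    set w : V → ℝ := fun v => Real.sign (y v) * t v with hwdef
    set x : V × Fin s → ℝ :=
      fun p => if p.2 = (⟨0, hs0⟩ : Fin s) then w p.1 else t p.1 with hx
    have htnn : ∀ v, 0 ≤ t v := fun v => Real.rpow_nonneg (abs_nonneg _) _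
    have htpow : ∀ v, t v ^ s = |y v| := fun v =>
      Real.rpow_inv_natCast_pow (abs_nonneg _) (by omega)
    have hxsq : ∀ p : V × Fin s, x p ^ 2 = t p.1 ^ 2 := by
      intro p
      rw [hx]
      dsimp only
      split
      · rw [hwdef]
        dsimp only
        by_cases h : y p.1 = 0
        · have ht0 : t p.1 = 0 := by
            rw [ht]
            dsimp only
            rw [h, abs_zero]
            exact Real.zero_rpow (inv_ne_zero (Nat.cast_ne_zero.mpr (by omega)))
          rw [h, Real.sign_zero, ht0]; ring
        · rcases Real.sign_apply_eq_of_ne_zero _ h with hs | hs <;> rw [hs] <;> ring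
      · rfl
    have ha : ∀ v, ∏ j, x (v, j) = y v := by
      intro v
      rw [← Finset.mul_prod_erase Finset.univ _ (Finset.mem_univ (⟨0, hs0⟩ : Fin s))]
      have hx0 : x (v, ⟨0, hs0⟩) = w v := if_pos rfl
      have hrest : ∏ j ∈ Finset.univ.erase (⟨0, hs0⟩ : Fin s), x (v, j)
          = t v ^ (s - 1) := by
        have hbody : ∀ j ∈ Finset.univ.erase (⟨0, hs0⟩ : Fin s), x (v, j) = t v :=
          fun j hj => if_neg (Finset.mem_erase.mp hj).1
        rw [Finset.prod_congr rfl hbody, Finset.prod_const,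
          Finset.card_erase_of_mem (Finset.mem_univ _), Finset.card_univ,
          Fintype.card_fin]
      rw [hx0, hrest, hwdef]
      dsimp only
      have : t v * t v ^ (s - 1) = t v ^ s := by
        rw [← pow_succ']
        congr 1
        omega
      calc Real.sign (y v) * t v * t v ^ (s - 1)
          = Real.sign (y v) * (t v * t v ^ (s - 1)) := by ring
        _ = Real.sign (y v) * |y v| := by rw [this, htpow]
        _ = y v := real_sign_mul_abs _
    refine ⟨x, ?_, ?_⟩
    · -- x ≠ 0
      obtain ⟨v, hyv⟩ := Function.ne_iff.mp hy0
      have hyv : y v ≠ 0 := by simpa using hyv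
      intro h0
      have htv : 0 < t v := Real.rpow_pos_of_pos (abs_pos.mpr hyv) _
      have h1 : x (v, (⟨1, by omega⟩ : Fin s)) = 0 := by rw [h0]; rfl
      have h2 : x (v, (⟨1, by omega⟩ : Fin s)) = t v := by
        rw [hx]
        exact if_neg (by simp)
      rw [h2] at h1
      exact htv.ne' h1
    · rintro ⟨v, i⟩
      rw [card_filter_powerEdges G hs0 v i, sum_filter_powerEdges G hs0 v i]
      set q : ℝ := ∏ j ∈ Finset.univ.erase i, x (v, j) with hqdef
      have hsum : ∑ u ∈ G.neighborFinset v, ∏ p ∈ (hedge s u v).erase (v, i), x p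
          = (∑ u ∈ G.neighborFinset v, y u) * q := by
        rw [Finset.sum_mul]
        apply Finset.sum_congr rfl
        intro u hu
        have hadj : G.Adj v u := by rwa [SimpleGraph.mem_neighborFinset] at hu
        rw [prod_hedge_erase x hadj.ne' i, ha u]
      rw [hsum]
      set c : ℝ := x (v, i) with hcdef
      have hqc : q * c = y v := by
        rw [hqdef, hcdef, Finset.prod_erase_mul Finset.univ _ (Finset.mem_univ i), ha v]
      have hq2 : q ^ 2 = (c ^ 2) ^ (s - 1) := by
        have hbody : ∀ j ∈ Finset.univ.erase i, x (v, j) ^ 2 = t v ^ 2 :=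
          fun j _ => hxsq (v, j)
        have hc2 : c ^ 2 = t v ^ 2 := hxsq (v, i)
        rw [hqdef, ← Finset.prod_pow, Finset.prod_congr rfl hbody, Finset.prod_const,
          Finset.card_erase_of_mem (Finset.mem_univ _), Finset.card_univ,
          Fintype.card_fin, hc2]
      have hck : c ^ (k - 1) = (c ^ 2) ^ (s - 1) * c := by
        rw [hk1, pow_succ, pow_mul]
      have hS : (∑ u ∈ G.neighborFinset v, y u)
          = (lam - (G.degree v : ℝ)) * y v := by
        have := hgraph v
        linarith
      have hSq : (∑ u ∈ G.neighborFinset v, y u) * q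
          = (lam - (G.degree v : ℝ)) * ((c ^ 2) ^ (s - 1) * c) := by
        calc (∑ u ∈ G.neighborFinset v, y u) * q
            = (lam - (G.degree v : ℝ)) * y v * q := by rw [hS]
          _ = (lam - (G.degree v : ℝ)) * (q ^ 2 * c) := by rw [← hqc]; ring
          _ = (lam - (G.degree v : ℝ)) * ((c ^ 2) ^ (s - 1) * c) := by rw [hq2]
      rw [hSq, hck]
      ring
  · -- minimality
    rintro μ ⟨x, hx0, heqn⟩
    set a : V → ℝ := fun v => ∏ j, x (v, j) with hadef
    set B : V → ℝ := fun v => ∑ u ∈ G.neighborFinset v, a u with hBdef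
    have hstar : ∀ (v : V) (i : Fin s),
        (μ - (G.degree v : ℝ)) * x (v, i) ^ k = a v * B v := by
      intro v i
      have heq := heqn (v, i)
      rw [card_filter_powerEdges G hs0 v i, sum_filter_powerEdges G hs0 v i] at heq
      set q : ℝ := ∏ j ∈ Finset.univ.erase i, x (v, j) with hqdef
      have hsum : ∑ u ∈ G.neighborFinset v, ∏ p ∈ (hedge s u v).erase (v, i), x p
          = B v * q := by
        have hBv : B v = ∑ u ∈ G.neighborFinset v, a u := rfl
        rw [hBv, Finset.sum_mul]
        apply Finset.sum_congr rfl
        intro u hu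
        have hadj : G.Adj v u := by rwa [SimpleGraph.mem_neighborFinset] at hu
        rw [prod_hedge_erase x hadj.ne' i]
      rw [hsum] at heq
      have hqc : q * x (v, i) = a v := by
        rw [hqdef, Finset.prod_erase_mul Finset.univ _ (Finset.mem_univ i)]
      have hpow : x (v, i) ^ (k - 1) * x (v, i) = x (v, i) ^ k := by
        rw [← pow_succ]
        congr 1
        omega
      calc (μ - (G.degree v : ℝ)) * x (v, i) ^ k
          = (μ * x (v, i) ^ (k - 1) - (G.degree v : ℝ) * x (v, i) ^ (k - 1)) * x (v, i) := by
            rw [← hpow]; ring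
        _ = (B v * q) * x (v, i) := by rw [heq]; ring
        _ = B v * (q * x (v, i)) := by ring
        _ = a v * B v := by rw [hqc]; ring
    by_cases hA0 : a = 0
    · -- some vertex has degree μ
      obtain ⟨p, hp⟩ := Function.ne_iff.mp hx0
      have hp : x p ≠ 0 := by simpa using hp
      have hmu : μ = (G.degree p.1 : ℝ) := by
        have h1 := hstar p.1 p.2
        rw [Prod.mk.eta] at h1
        have h2 : a p.1 = 0 := by rw [hA0]; rfl
        rw [h2, zero_mul] at h1
        have h3 : x p ^ k ≠ 0 := pow_ne_zero _ hp
        have := mul_eq_zero.mp h1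
        rcases this with h | h
        · linarith [sub_eq_zero.mp h]
        · exact absurd h h3
      have hray := rayleigh Q hQH lam hLeast (Pi.single p.1 1)
      have hsq : ∑ v, (Pi.single p.1 1 : V → ℝ) v ^ 2 = 1 := by
        rw [Finset.sum_eq_single p.1]
        · simp
        · intro b _ hb; rw [Pi.single_eq_of_ne hb]; ring
        · intro hb; exact absurd (Finset.mem_univ _) hb
      have hqf : ∑ v, (Pi.single p.1 1 : V → ℝ) v * Q.mulVec (Pi.single p.1 1) v
          = (G.degree p.1 : ℝ) := by
        rw [Finset.sum_eq_single p.1]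
        · rw [Pi.single_eq_same, one_mul, hmulQ, Pi.single_eq_same]
          have : ∑ u ∈ G.neighborFinset p.1, (Pi.single p.1 1 : V → ℝ) u = 0 := by
            apply Finset.sum_eq_zero
            intro u hu
            have hadj : G.Adj p.1 u := by rwa [SimpleGraph.mem_neighborFinset] at hu
            exact Pi.single_eq_of_ne hadj.ne' 1
          rw [this]
          ring
        · intro b _ hb; rw [Pi.single_eq_of_ne hb]; ring
        · intro hb; exact absurd (Finset.mem_univ _) hb
      rw [hsq, hqf, mul_one] at hray
      rw [hmu]
      exact hray
    · -- a is (the restriction of) an eigenvector-like vector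
      have hclaim : ∀ v, a v * Q.mulVec a v = μ * a v ^ 2 := by
        intro v
        rw [hmulQ a v]
        by_cases hav : a v = 0
        · rw [hav]; ring
        · by_cases hmu : μ = (G.degree v : ℝ)
          · have h1 := hstar v ⟨0, hs0⟩
            rw [hmu, sub_self, zero_mul] at h1
            have hBv2 : ∑ u ∈ G.neighborFinset v, a u = B v := rfl
            rw [hmu, hBv2]
            have hB0 : B v = 0 := by
              rcases mul_eq_zero.mp h1.symm with h | h
              · exact absurd h hav
              · exact h
            rw [hB0]
            ring
          · have hxne : ∀ j : Fin s, x (v, j) ≠ 0 := by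
              intro j
              have : a v = ∏ j, x (v, j) := rfl
              exact fun h => hav (by
                rw [this]
                exact Finset.prod_eq_zero (Finset.mem_univ j) h)
            have hsub : μ - (G.degree v : ℝ) ≠ 0 := sub_ne_zero.mpr hmu
            have hxx : ∀ j : Fin s, x (v, j) ^ 2 = x (v, ⟨0, hs0⟩) ^ 2 := by
              intro j
              have h3 : x (v, j) ^ k = x (v, (⟨0, hs0⟩ : Fin s)) ^ k :=
                mul_left_cancel₀ hsub ((hstar v j).trans (hstar v ⟨0, hs0⟩).symm)
              rw [hks, pow_mul, pow_mul] at h3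
              exact (pow_left_inj₀ (sq_nonneg _) (sq_nonneg _)
                (by omega : s ≠ 0)).mp h3
            have hav2 : a v ^ 2 = x (v, (⟨0, hs0⟩ : Fin s)) ^ k := by
              have h4 : a v ^ 2 = ∏ j, x (v, j) ^ 2 := by
                rw [hadef]
                dsimp only
                rw [Finset.prod_pow]
              rw [h4, Finset.prod_congr rfl (fun j _ => hxx j), Finset.prod_const,
                Finset.card_univ, Fintype.card_fin, hks, pow_mul]
            have h0 := hstar v (⟨0, hs0⟩ : Fin s)
            rw [← hav2] at h0
            have hBv : ∑ u ∈ G.neighborFinset v, a u = B v := rfl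
            rw [hBv]
            linear_combination -h0
      have hsum2 : ∑ v, a v * Q.mulVec a v = μ * ∑ v, a v ^ 2 := by
        rw [Finset.mul_sum]
        exact Finset.sum_congr rfl (fun v _ => hclaim v)
      have hray := rayleigh Q hQH lam hLeast a
      rw [hsum2] at hray
      have hpos : 0 < ∑ v, a v ^ 2 := by
        obtain ⟨v, hv⟩ := Function.ne_iff.mp hA0
        have hv : a v ≠ 0 := by simpa using hv
        exact Finset.sum_pos' (fun i _ => sq_nonneg _)
          ⟨v, Finset.mem_univ v, pow_two_pos_of_ne_zero hv⟩
      exact le_of_mul_le_mul_right hray hpos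
end

section
/- Let k ≥ 4 be an even integer and let r be a real number with r ≤ −√(2+√5). Then there exists a sequence (H_n) of k-uniform hypergraphs and a sequence (λ_n) of real numbers such that for each n, λ_n is an adjacency H-eigenvalue of H_n with λ_n ≤ μ for every adjacency H-eigenvalue μ of H_n (i.e., λ_n is the least adjacency H-eigenvalue of H_n), and λ_n → r as n → ∞. In other words, every real number r ≤ −√(2+√5) is a limit point of the least adjacency H-eigenvalues of k-uniform hypergraphs. -/
open Finset

/-- A `k`-uniform hypergraph with vertices drawn from `ℕ`. -/
structure UniformHypergraph (k : ℕ) where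
  verts : Finset ℕ
  edges : Finset (Finset ℕ)
  subset_verts : ∀ e ∈ edges, e ⊆ verts
  uniform : ∀ e ∈ edges, e.card = k

/-- `lam` is an adjacency H-eigenvalue of the `k`-uniform hypergraph `H`. -/
def UniformHypergraph.IsAdjHEig {k : ℕ} (H : UniformHypergraph k) (lam : ℝ) : Prop :=
  ∃ x : ℕ → ℝ, (∃ v ∈ H.verts, x v ≠ 0) ∧ ∀ v ∈ H.verts,
    lam * x v ^ (k - 1)
      = ∑ e ∈ H.edges.filter (fun e => v ∈ e), ∏ w ∈ e.erase v, x w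

namespace Stmt17Aux

lemma sign_flip {k : ℕ} (H : UniformHypergraph k) (hodd : Odd (k - 1))
    (σ x : ℕ → ℝ) (hσ : ∀ v, σ v = 1 ∨ σ v = -1)
    (hprod : ∀ e ∈ H.edges, ∏ v ∈ e, σ v = -1) (ρ : ℝ)
    (hnz : ∃ v ∈ H.verts, x v ≠ 0)
    (hx : ∀ v ∈ H.verts, ρ * x v ^ (k - 1)
      = ∑ e ∈ H.edges.filter (fun e => v ∈ e), ∏ w ∈ e.erase v, x w) :
    H.IsAdjHEig (-ρ) := by
  obtain ⟨v₀, hv₀, hx₀⟩ := hnz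
  refine ⟨fun v => σ v * x v, ⟨v₀, hv₀, ?_⟩, ?_⟩
  · rcases hσ v₀ with h | h <;> simp [h, hx₀]
  · intro v hv
    have hσpow : σ v ^ (k - 1) = σ v := by
      rcases hσ v with h | h
      · rw [h, one_pow]
      · rw [h, hodd.neg_one_pow]
    have key : ∀ e ∈ H.edges.filter (fun e => v ∈ e),
        ∏ w ∈ e.erase v, (σ w * x w) = (-σ v) * ∏ w ∈ e.erase v, x w := by
      intro e he
      rw [Finset.prod_mul_distrib]
      have hve : v ∈ e := (Finset.mem_filter.1 he).2
      have he' : e ∈ H.edges := (Finset.mem_filter.1 he).1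
      have h1 : σ v * ∏ w ∈ e.erase v, σ w = -1 := by
        rw [Finset.mul_prod_erase e σ hve]; exact hprod e he'
      have h2 : ∏ w ∈ e.erase v, σ w = -σ v := by
        rcases hσ v with h | h <;> rw [h] at h1 ⊢ <;> nlinarith [h1]
      rw [h2]
    rw [Finset.sum_congr rfl key, ← Finset.mul_sum, ← hx v hv, mul_pow, hσpow]
    ring

lemma eig_bound {k : ℕ} (H : UniformHypergraph k) (P : ℕ → ℝ) (ρ : ℝ)
    (hP : ∀ v ∈ H.verts, 0 < P v)
    (hPeig : ∀ v ∈ H.verts, ρ * P v ^ (k - 1)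
      = ∑ e ∈ H.edges.filter (fun e => v ∈ e), ∏ w ∈ e.erase v, P w)
    {μ : ℝ} (hμ : H.IsAdjHEig μ) : |μ| ≤ ρ := by
  obtain ⟨x, ⟨v₀, hv₀, hx₀⟩, hxe⟩ := hμ
  obtain ⟨tv, htv, hmax⟩ := Finset.exists_max_image H.verts (fun v => |x v| / P v) ⟨v₀, hv₀⟩
  set cc := |x tv| / P tv with hcc
  have hPtv := hP tv htv
  have hccpos : 0 < cc := lt_of_lt_of_le (div_pos (abs_pos.2 hx₀) (hP v₀ hv₀)) (hmax v₀ hv₀)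
  have hbound : ∀ w ∈ H.verts, |x w| ≤ cc * P w := by
    intro w hw
    have h := hmax w hw
    rwa [div_le_iff₀ (hP w hw)] at h
  have hxt : |x tv| = cc * P tv := by
    rw [hcc, div_mul_cancel₀ _ hPtv.ne']
  have hchain : |μ| * |x tv| ^ (k - 1) ≤ ρ * P tv ^ (k - 1) * cc ^ (k - 1) := by
    calc |μ| * |x tv| ^ (k - 1) = |μ * x tv ^ (k - 1)| := by rw [abs_mul, abs_pow]
      _ = |∑ e ∈ H.edges.filter (fun e => tv ∈ e), ∏ w ∈ e.erase tv, x w| := by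
          rw [hxe tv htv]
      _ ≤ ∑ e ∈ H.edges.filter (fun e => tv ∈ e), |∏ w ∈ e.erase tv, x w| :=
          Finset.abs_sum_le_sum_abs _ _
      _ ≤ ∑ e ∈ H.edges.filter (fun e => tv ∈ e), ∏ w ∈ e.erase tv, (cc * P w) := by
          refine Finset.sum_le_sum fun e he => ?_
          rw [Finset.abs_prod]
          refine Finset.prod_le_prod (fun w _ => abs_nonneg _) (fun w hw => ?_)
          exact hbound w (H.subset_verts e (Finset.mem_filter.1 he).1
            (Finset.erase_subset _ _ hw))
      _ = ∑ e ∈ H.edges.filter (fun e => tv ∈ e), cc ^ (k - 1) * ∏ w ∈ e.erase tv, P w := by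
          refine Finset.sum_congr rfl fun e he => ?_
          rw [Finset.prod_mul_distrib, Finset.prod_const]
          congr 2
          rw [Finset.card_erase_of_mem (Finset.mem_filter.1 he).2,
            H.uniform e (Finset.mem_filter.1 he).1]
      _ = cc ^ (k - 1) * ∑ e ∈ H.edges.filter (fun e => tv ∈ e), ∏ w ∈ e.erase tv, P w := by
          rw [Finset.mul_sum]
      _ = cc ^ (k - 1) * (ρ * P tv ^ (k - 1)) := by rw [← hPeig tv htv]
      _ = ρ * P tv ^ (k - 1) * cc ^ (k - 1) := by ring
  rw [hxt] at hchain
  have h2 : ρ * P tv ^ (k - 1) * cc ^ (k - 1) = ρ * (cc * P tv) ^ (k - 1) := by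
    rw [mul_pow]; ring
  rw [h2] at hchain
  have hpos : 0 < (cc * P tv) ^ (k - 1) := pow_pos (mul_pos hccpos hPtv) _
  exact le_of_mul_le_mul_right hchain hpos


/-! ### Vertex encodings -/

def pa (i : ℕ) : ℕ := 4 * i
def fi (i j : ℕ) : ℕ := 4 * Nat.pair i j + 1
def pe (i cc l : ℕ) : ℕ := 4 * Nat.pair i (Nat.pair cc l) + 2

lemma pa_inj {i i' : ℕ} (h : pa i = pa i') : i = i' := by
  unfold pa at h; omega

lemma fi_inj {i j i' j' : ℕ} (h : fi i j = fi i' j') : i = i' ∧ j = j' := by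
  unfold fi at h
  have : Nat.pair i j = Nat.pair i' j' := by omega
  rwa [Nat.pair_eq_pair] at this

lemma pe_inj {i cc l i' cc' l' : ℕ} (h : pe i cc l = pe i' cc' l') :
    i = i' ∧ cc = cc' ∧ l = l' := by
  unfold pe at h
  have h1 : Nat.pair i (Nat.pair cc l) = Nat.pair i' (Nat.pair cc' l') := by omega
  rw [Nat.pair_eq_pair] at h1
  have h2 := h1.2
  rw [Nat.pair_eq_pair] at h2
  exact ⟨h1.1, h2.1, h2.2⟩

lemma pa_ne_fi (i i' j' : ℕ) : pa i ≠ fi i' j' := by unfold pa fi; omega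
lemma pa_ne_pe (i i' cc' l' : ℕ) : pa i ≠ pe i' cc' l' := by unfold pa pe; omega
lemma fi_ne_pe (i j i' cc' l' : ℕ) : fi i j ≠ pe i' cc' l' := by unfold fi pe; omega

lemma fi_injective (i : ℕ) : Function.Injective (fi i) := by
  intro a b h; exact (fi_inj h).2

lemma pe_injective (i cc : ℕ) : Function.Injective (pe i cc) := by
  intro a b h; exact (pe_inj h).2.2

/-! ### Edges -/

def Fset (t i : ℕ) : Finset ℕ := (Finset.range (2 * t + 2)).image (fi i)
def Wset (t i cc : ℕ) : Finset ℕ := (Finset.range (2 * t + 3)).image (pe i cc)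
def pathE (t i : ℕ) : Finset ℕ := insert (pa i) (insert (pa (i + 1)) (Fset t i))
def pendE (t i cc : ℕ) : Finset ℕ := insert (pa i) (Wset t i cc)

def edges (t n : ℕ) (c : ℕ → ℕ) : Finset (Finset ℕ) :=
  (Finset.range n).image (pathE t) ∪
    (Finset.range (n + 1)).biUnion (fun i => (Finset.range (c i)).image (pendE t i))

def verts (t n : ℕ) (c : ℕ → ℕ) : Finset ℕ := (edges t n c).sup id

/-! ### Membership -/

lemma mem_Fset {t i v : ℕ} : v ∈ Fset t i ↔ ∃ j < 2 * t + 2, v = fi i j := by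
  simp only [Fset, Finset.mem_image, Finset.mem_range]
  constructor
  · rintro ⟨j, hj, rfl⟩; exact ⟨j, hj, rfl⟩
  · rintro ⟨j, hj, rfl⟩; exact ⟨j, hj, rfl⟩

lemma mem_Wset {t i cc v : ℕ} : v ∈ Wset t i cc ↔ ∃ l < 2 * t + 3, v = pe i cc l := by
  simp only [Wset, Finset.mem_image, Finset.mem_range]
  constructor
  · rintro ⟨l, hl, rfl⟩; exact ⟨l, hl, rfl⟩
  · rintro ⟨l, hl, rfl⟩; exact ⟨l, hl, rfl⟩

lemma mem_pathE {t i v : ℕ} :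
    v ∈ pathE t i ↔ v = pa i ∨ v = pa (i + 1) ∨ ∃ j < 2 * t + 2, v = fi i j := by
  simp only [pathE, Finset.mem_insert, mem_Fset]

lemma mem_pendE {t i cc v : ℕ} :
    v ∈ pendE t i cc ↔ v = pa i ∨ ∃ l < 2 * t + 3, v = pe i cc l := by
  simp only [pendE, Finset.mem_insert, mem_Wset]

lemma pa_mem_pathE {t m i : ℕ} : pa m ∈ pathE t i ↔ m = i ∨ m = i + 1 := by
  rw [mem_pathE]
  constructor
  · rintro (h | h | ⟨j, _, h⟩)
    · exact Or.inl (pa_inj h)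
    · exact Or.inr (pa_inj h)
    · exact absurd h (pa_ne_fi _ _ _)
  · rintro (rfl | rfl)
    · exact Or.inl rfl
    · exact Or.inr (Or.inl rfl)

lemma fi_mem_pathE {t m j i : ℕ} : fi m j ∈ pathE t i ↔ m = i ∧ j < 2 * t + 2 := by
  rw [mem_pathE]
  constructor
  · rintro (h | h | ⟨j', hj', h⟩)
    · exact absurd h.symm (pa_ne_fi _ _ _)
    · exact absurd h.symm (pa_ne_fi _ _ _)
    · obtain ⟨h1, h2⟩ := fi_inj h; exact ⟨h1, by omega⟩
  · rintro ⟨rfl, hj⟩; exact Or.inr (Or.inr ⟨j, hj, rfl⟩)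

lemma pe_not_mem_pathE {t m cc l i : ℕ} : pe m cc l ∉ pathE t i := by
  rw [mem_pathE]
  rintro (h | h | ⟨j, _, h⟩)
  · exact pa_ne_pe _ _ _ _ h.symm
  · exact pa_ne_pe _ _ _ _ h.symm
  · exact fi_ne_pe _ _ _ _ _ h.symm

lemma pa_mem_pendE {t m i cc : ℕ} : pa m ∈ pendE t i cc ↔ m = i := by
  rw [mem_pendE]
  constructor
  · rintro (h | ⟨l, _, h⟩)
    · exact pa_inj h
    · exact absurd h (pa_ne_pe _ _ _ _)
  · rintro rfl; exact Or.inl rfl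

lemma fi_not_mem_pendE {t m j i cc : ℕ} : fi m j ∉ pendE t i cc := by
  rw [mem_pendE]
  rintro (h | ⟨l, _, h⟩)
  · exact pa_ne_fi _ _ _ h.symm
  · exact fi_ne_pe _ _ _ _ _ h

lemma pe_mem_pendE {t m c0 l i cc : ℕ} :
    pe m c0 l ∈ pendE t i cc ↔ m = i ∧ c0 = cc ∧ l < 2 * t + 3 := by
  rw [mem_pendE]
  constructor
  · rintro (h | ⟨l', hl', h⟩)
    · exact absurd h.symm (pa_ne_pe _ _ _ _)
    · obtain ⟨h1, h2, h3⟩ := pe_inj h; exact ⟨h1, h2, by omega⟩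
  · rintro ⟨rfl, rfl, hl⟩; exact Or.inr ⟨l, hl, rfl⟩

lemma pathE_inj {t i i' : ℕ} (h : pathE t i = pathE t i') : i = i' := by
  have h1 : pa i ∈ pathE t i' := h ▸ (mem_pathE.2 (Or.inl rfl))
  have h2 : pa (i + 1) ∈ pathE t i' := h ▸ (mem_pathE.2 (Or.inr (Or.inl rfl)))
  rw [pa_mem_pathE] at h1 h2
  omega

lemma pendE_inj {t i cc i' cc' : ℕ} (h : pendE t i cc = pendE t i' cc') :
    i = i' ∧ cc = cc' := by
  have h1 : pe i cc 0 ∈ pendE t i' cc' := h ▸ (pe_mem_pendE.2 ⟨rfl, rfl, by omega⟩)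
  rw [pe_mem_pendE] at h1
  exact ⟨h1.1, h1.2.1⟩

lemma pathE_ne_pendE {t i i' cc' : ℕ} : pathE t i ≠ pendE t i' cc' := by
  intro h
  have h1 : fi i 0 ∈ pendE t i' cc' := h ▸ (fi_mem_pathE.2 ⟨rfl, by omega⟩)
  exact fi_not_mem_pendE h1

lemma mem_edges {t n : ℕ} {c : ℕ → ℕ} {e : Finset ℕ} :
    e ∈ edges t n c ↔ (∃ i < n, e = pathE t i) ∨ (∃ i ≤ n, ∃ cc < c i, e = pendE t i cc) := by
  simp only [edges, Finset.mem_union, Finset.mem_image, Finset.mem_biUnion, Finset.mem_range]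
  constructor
  · rintro (⟨i, hi, rfl⟩ | ⟨i, hi, cc, hcc, rfl⟩)
    · exact Or.inl ⟨i, hi, rfl⟩
    · exact Or.inr ⟨i, by omega, cc, hcc, rfl⟩
  · rintro (⟨i, hi, rfl⟩ | ⟨i, hi, cc, hcc, rfl⟩)
    · exact Or.inl ⟨i, hi, rfl⟩
    · exact Or.inr ⟨i, by omega, cc, hcc, rfl⟩

lemma mem_verts {t n : ℕ} {c : ℕ → ℕ} {v : ℕ} :
    v ∈ verts t n c ↔ ∃ e ∈ edges t n c, v ∈ e := by
  simp only [verts, Finset.mem_sup, id]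

lemma verts_cases {t n : ℕ} {c : ℕ → ℕ} {v : ℕ} (hv : v ∈ verts t n c) :
    (∃ m ≤ n, v = pa m) ∨ (∃ m < n, ∃ j < 2 * t + 2, v = fi m j) ∨
      (∃ m ≤ n, ∃ cc < c m, ∃ l < 2 * t + 3, v = pe m cc l) := by
  obtain ⟨e, he, hve⟩ := mem_verts.1 hv
  rcases mem_edges.1 he with ⟨i, hi, rfl⟩ | ⟨i, hi, cc, hcc, rfl⟩
  · rcases mem_pathE.1 hve with h | h | ⟨j, hj, h⟩
    · exact Or.inl ⟨i, by omega, h⟩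
    · exact Or.inl ⟨i + 1, by omega, h⟩
    · exact Or.inr (Or.inl ⟨i, hi, j, hj, h⟩)
  · rcases mem_pendE.1 hve with h | ⟨l, hl, h⟩
    · exact Or.inl ⟨i, hi, h⟩
    · exact Or.inr (Or.inr ⟨i, hi, cc, hcc, l, hl, h⟩)

/-! ### Cards -/

lemma pa_not_mem_Fset {t i m : ℕ} : pa m ∉ Fset t i := by
  rw [mem_Fset]; rintro ⟨j, _, h⟩; exact pa_ne_fi _ _ _ h

lemma pa_not_mem_Wset {t i cc m : ℕ} : pa m ∉ Wset t i cc := by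
  rw [mem_Wset]; rintro ⟨l, _, h⟩; exact pa_ne_pe _ _ _ _ h

lemma card_Fset (t i : ℕ) : (Fset t i).card = 2 * t + 2 := by
  rw [Fset, Finset.card_image_of_injective _ (fi_injective i), Finset.card_range]

lemma card_Wset (t i cc : ℕ) : (Wset t i cc).card = 2 * t + 3 := by
  rw [Wset, Finset.card_image_of_injective _ (pe_injective i cc), Finset.card_range]

lemma card_pathE (t i : ℕ) : (pathE t i).card = 2 * t + 4 := by
  rw [pathE, Finset.card_insert_of_notMem, Finset.card_insert_of_notMem pa_not_mem_Fset,
    card_Fset]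
  · rw [Finset.mem_insert]
    push_neg
    exact ⟨fun h => by have := pa_inj h; omega, pa_not_mem_Fset⟩

lemma card_pendE (t i cc : ℕ) : (pendE t i cc).card = 2 * t + 4 := by
  rw [pendE, Finset.card_insert_of_notMem pa_not_mem_Wset, card_Wset]

def HG (t n : ℕ) (c : ℕ → ℕ) : UniformHypergraph (2 * t + 4) where
  verts := verts t n c
  edges := edges t n c
  subset_verts := fun e he => Finset.le_sup (f := id) he
  uniform := by
    intro e he
    rcases mem_edges.1 he with ⟨i, _, rfl⟩ | ⟨i, _, cc, _, rfl⟩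
    · exact card_pathE t i
    · exact card_pendE t i cc

/-! ### Values -/

noncomputable def Yv (ρ : ℝ) (X : ℕ → ℝ) (i : ℕ) : ℝ := Real.sqrt (X i * X (i + 1) / ρ)

noncomputable def Pv (ρ : ℝ) (X : ℕ → ℝ) (v : ℕ) : ℝ :=
  if v % 4 = 0 then X (v / 4)
  else if v % 4 = 1 then Yv ρ X (Nat.unpair (v / 4)).1
  else if v % 4 = 2 then X (Nat.unpair (v / 4)).1 / ρ
  else 1

noncomputable def sg (v : ℕ) : ℝ :=
  if v % 4 = 1 then (if (Nat.unpair (v / 4)).2 = 0 then -1 else 1)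
  else if v % 4 = 2 then (if (Nat.unpair ((Nat.unpair (v / 4)).2)).2 = 0 then -1 else 1)
  else 1

lemma Pv_pa (ρ : ℝ) (X : ℕ → ℝ) (i : ℕ) : Pv ρ X (pa i) = X i := by
  have h1 : pa i % 4 = 0 := by unfold pa; omega
  have h2 : pa i / 4 = i := by unfold pa; omega
  simp [Pv, h1, h2]

lemma Pv_fi (ρ : ℝ) (X : ℕ → ℝ) (i j : ℕ) : Pv ρ X (fi i j) = Yv ρ X i := by
  have h1 : fi i j % 4 = 1 := by unfold fi; omega
  have h2 : fi i j / 4 = Nat.pair i j := by unfold fi; omega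
  simp [Pv, h1, h2]

lemma Pv_pe (ρ : ℝ) (X : ℕ → ℝ) (i cc l : ℕ) : Pv ρ X (pe i cc l) = X i / ρ := by
  have h1 : pe i cc l % 4 = 2 := by unfold pe; omega
  have h2 : pe i cc l / 4 = Nat.pair i (Nat.pair cc l) := by unfold pe; omega
  simp [Pv, h1, h2]

lemma sg_pa (i : ℕ) : sg (pa i) = 1 := by
  have h1 : pa i % 4 = 0 := by unfold pa; omega
  simp [sg, h1]

lemma sg_fi (i j : ℕ) : sg (fi i j) = if j = 0 then -1 else 1 := by
  have h1 : fi i j % 4 = 1 := by unfold fi; omega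
  have h2 : fi i j / 4 = Nat.pair i j := by unfold fi; omega
  simp [sg, h1, h2]

lemma sg_pe (i cc l : ℕ) : sg (pe i cc l) = if l = 0 then -1 else 1 := by
  have h1 : pe i cc l % 4 = 2 := by unfold pe; omega
  have h2 : pe i cc l / 4 = Nat.pair i (Nat.pair cc l) := by unfold pe; omega
  simp [sg, h1, h2]

lemma sg_pm (v : ℕ) : sg v = 1 ∨ sg v = -1 := by
  unfold sg; split_ifs <;> simp

/-! ### Products over pieces -/

lemma prod_Fset (t : ℕ) (ρ : ℝ) (X : ℕ → ℝ) (i : ℕ) :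
    ∏ w ∈ Fset t i, Pv ρ X w = Yv ρ X i ^ (2 * t + 2) := by
  rw [Fset, Finset.prod_image (fun x _ y _ h => fi_injective i h)]
  rw [Finset.prod_congr rfl (fun j _ => Pv_fi ρ X i j), Finset.prod_const, Finset.card_range]

lemma prod_Wset (t : ℕ) (ρ : ℝ) (X : ℕ → ℝ) (i cc : ℕ) :
    ∏ w ∈ Wset t i cc, Pv ρ X w = (X i / ρ) ^ (2 * t + 3) := by
  rw [Wset, Finset.prod_image (fun x _ y _ h => pe_injective i cc h)]
  rw [Finset.prod_congr rfl (fun l _ => Pv_pe ρ X i cc l), Finset.prod_const, Finset.card_range]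

lemma pa_not_mem_insert (t i : ℕ) : pa i ∉ insert (pa (i + 1)) (Fset t i) := by
  rw [Finset.mem_insert]
  rintro (h | h)
  · have := pa_inj h; omega
  · exact pa_not_mem_Fset h

lemma pa1_not_mem_insert (t i : ℕ) : pa (i + 1) ∉ insert (pa i) (Fset t i) := by
  rw [Finset.mem_insert]
  rintro (h | h)
  · have := pa_inj h; omega
  · exact pa_not_mem_Fset h

lemma prod_pathE_erase_left (t : ℕ) (ρ : ℝ) (X : ℕ → ℝ) (i : ℕ) :
    ∏ w ∈ (pathE t i).erase (pa i), Pv ρ X w = X (i + 1) * Yv ρ X i ^ (2 * t + 2) := by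
  rw [pathE, Finset.erase_insert (pa_not_mem_insert t i),
    Finset.prod_insert pa_not_mem_Fset, Pv_pa, prod_Fset]

lemma prod_pathE_erase_right (t : ℕ) (ρ : ℝ) (X : ℕ → ℝ) (i : ℕ) :
    ∏ w ∈ (pathE t i).erase (pa (i + 1)), Pv ρ X w = X i * Yv ρ X i ^ (2 * t + 2) := by
  rw [pathE, Finset.insert_comm, Finset.erase_insert (pa1_not_mem_insert t i),
    Finset.prod_insert pa_not_mem_Fset, Pv_pa, prod_Fset]

lemma prod_pathE_erase_fi (t : ℕ) (ρ : ℝ) (X : ℕ → ℝ) (i j : ℕ) (hj : j < 2 * t + 2) :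
    ∏ w ∈ (pathE t i).erase (fi i j), Pv ρ X w
      = X i * (X (i + 1) * Yv ρ X i ^ (2 * t + 1)) := by
  rw [pathE, Finset.erase_insert_of_ne (pa_ne_fi i i j),
    Finset.erase_insert_of_ne (pa_ne_fi (i + 1) i j)]
  have hFe : (Fset t i).erase (fi i j) = ((Finset.range (2 * t + 2)).erase j).image (fi i) := by
    rw [Finset.image_erase (fi_injective i), Fset]
  have h1 : pa (i + 1) ∉ (Fset t i).erase (fi i j) :=
    fun h => pa_not_mem_Fset (Finset.mem_of_mem_erase h)
  have h2 : pa i ∉ insert (pa (i + 1)) ((Fset t i).erase (fi i j)) := by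
    rw [Finset.mem_insert]
    rintro (h | h)
    · have := pa_inj h; omega
    · exact pa_not_mem_Fset (Finset.mem_of_mem_erase h)
  rw [Finset.prod_insert h2, Finset.prod_insert h1, Pv_pa, Pv_pa, hFe,
    Finset.prod_image (fun x _ y _ h => fi_injective i h),
    Finset.prod_congr rfl (fun l _ => Pv_fi ρ X i l), Finset.prod_const,
    Finset.card_erase_of_mem (Finset.mem_range.2 hj), Finset.card_range]
  norm_num

lemma prod_pendE_erase_pa (t : ℕ) (ρ : ℝ) (X : ℕ → ℝ) (i cc : ℕ) :
    ∏ w ∈ (pendE t i cc).erase (pa i), Pv ρ X w = (X i / ρ) ^ (2 * t + 3) := by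
  rw [pendE, Finset.erase_insert pa_not_mem_Wset, prod_Wset]

lemma prod_pendE_erase_pe (t : ℕ) (ρ : ℝ) (X : ℕ → ℝ) (i cc l : ℕ) (hl : l < 2 * t + 3) :
    ∏ w ∈ (pendE t i cc).erase (pe i cc l), Pv ρ X w
      = X i * (X i / ρ) ^ (2 * t + 2) := by
  rw [pendE, Finset.erase_insert_of_ne (pa_ne_pe i i cc l)]
  have h1 : pa i ∉ (Wset t i cc).erase (pe i cc l) :=
    fun h => pa_not_mem_Wset (Finset.mem_of_mem_erase h)
  have hWe : (Wset t i cc).erase (pe i cc l)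
      = ((Finset.range (2 * t + 3)).erase l).image (pe i cc) := by
    rw [Finset.image_erase (pe_injective i cc), Wset]
  rw [Finset.prod_insert h1, Pv_pa, hWe,
    Finset.prod_image (fun x _ y _ h => pe_injective i cc h),
    Finset.prod_congr rfl (fun l' _ => Pv_pe ρ X i cc l'), Finset.prod_const,
    Finset.card_erase_of_mem (Finset.mem_range.2 hl), Finset.card_range]
  norm_num

/-! ### Sign products over edges -/

lemma sg_prod_edge (t n : ℕ) (c : ℕ → ℕ) : ∀ e ∈ edges t n c, ∏ v ∈ e, sg v = -1 := by
  intro e he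
  rcases mem_edges.1 he with ⟨i, _, rfl⟩ | ⟨i, _, cc, _, rfl⟩
  · rw [pathE, Finset.prod_insert (pa_not_mem_insert t i),
      Finset.prod_insert pa_not_mem_Fset, sg_pa, sg_pa, Fset,
      Finset.prod_image (fun x _ y _ h => fi_injective i h),
      Finset.prod_congr rfl (fun j _ => sg_fi i j),
      Finset.prod_ite_eq' (Finset.range (2 * t + 2)) 0 (fun _ => (-1 : ℝ))]
    simp
  · rw [pendE, Finset.prod_insert pa_not_mem_Wset, sg_pa, Wset,
      Finset.prod_image (fun x _ y _ h => pe_injective i cc h),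
      Finset.prod_congr rfl (fun l _ => sg_pe i cc l),
      Finset.prod_ite_eq' (Finset.range (2 * t + 3)) 0 (fun _ => (-1 : ℝ))]
    simp

/-! ### Sum decomposition -/

lemma sum_edges_filter (t n : ℕ) (c : ℕ → ℕ) (v : ℕ) (f : Finset ℕ → ℝ) :
    ∑ e ∈ (edges t n c).filter (fun e => v ∈ e), f e
      = (∑ i ∈ (Finset.range n).filter (fun i => v ∈ pathE t i), f (pathE t i))
        + ∑ i ∈ Finset.range (n + 1),
            ∑ cc ∈ (Finset.range (c i)).filter (fun cc => v ∈ pendE t i cc), f (pendE t i cc) := by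
  have hd : Disjoint ((Finset.range n).image (pathE t))
      ((Finset.range (n + 1)).biUnion (fun i => (Finset.range (c i)).image (pendE t i))) := by
    rw [Finset.disjoint_left]
    intro e he1 he2
    simp only [Finset.mem_image, Finset.mem_biUnion, Finset.mem_range] at he1 he2
    obtain ⟨i, _, rfl⟩ := he1
    obtain ⟨i', _, cc, _, h⟩ := he2
    exact pathE_ne_pendE h.symm
  have hpair : (↑(Finset.range (n + 1)) : Set ℕ).PairwiseDisjoint
      (fun i => ((Finset.range (c i)).image (pendE t i)).filter (fun e => v ∈ e)) := by
    intro i _ i' _ hne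
    simp only [Function.onFun]
    rw [Finset.disjoint_left]
    intro e he1 he2
    obtain ⟨cc, _, h1⟩ := Finset.mem_image.1 (Finset.mem_of_mem_filter e he1)
    obtain ⟨cc', _, h2⟩ := Finset.mem_image.1 (Finset.mem_of_mem_filter e he2)
    exact hne (pendE_inj (h1.trans h2.symm)).1
  rw [edges, Finset.filter_union, Finset.sum_union (Finset.disjoint_filter_filter hd),
    Finset.filter_image, Finset.sum_image (fun x _ y _ h => pathE_inj h),
    Finset.filter_biUnion, Finset.sum_biUnion hpair]
  congr 1
  refine Finset.sum_congr rfl fun i _ => ?_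
  rw [Finset.filter_image, Finset.sum_image (fun x _ y _ h => (pendE_inj h).2)]

lemma sum_filter_range_pa (t n m : ℕ) (hm : m ≤ n) (g : ℕ → ℝ) :
    ∑ i ∈ (Finset.range n).filter (fun i => pa m ∈ pathE t i), g i
      = (if 0 < m then g (m - 1) else 0) + (if m < n then g m else 0) := by
  have hset : (Finset.range n).filter (fun i => pa m ∈ pathE t i)
      = (Finset.range n).filter (fun i => m = i ∨ m = i + 1) := by
    ext i
    simp only [Finset.mem_filter, pa_mem_pathE]
  rw [hset]
  rcases Nat.eq_zero_or_pos m with rfl | hm0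
  · by_cases hn : 0 < n
    · have hone : (Finset.range n).filter (fun i => 0 = i ∨ 0 = i + 1) = {0} := by
        ext i
        simp only [Finset.mem_filter, Finset.mem_range, Finset.mem_singleton]
        omega
      rw [hone, Finset.sum_singleton, if_neg (lt_irrefl 0), if_pos hn, zero_add]
    · have hn0 : n = 0 := by omega
      subst hn0
      simp
  · by_cases hmn : m < n
    · have htwo : (Finset.range n).filter (fun i => m = i ∨ m = i + 1) = {m - 1, m} := by
        ext i
        simp only [Finset.mem_filter, Finset.mem_range, Finset.mem_insert, Finset.mem_singleton]
        omega
      rw [htwo, Finset.sum_pair (by omega : m - 1 ≠ m), if_pos hm0, if_pos hmn]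
    · have hone : (Finset.range n).filter (fun i => m = i ∨ m = i + 1) = {m - 1} := by
        ext i
        simp only [Finset.mem_filter, Finset.mem_range, Finset.mem_singleton]
        omega
      rw [hone, Finset.sum_singleton, if_pos hm0, if_neg hmn, add_zero]

/-! ### The eigen-equation for Pv -/

lemma Yv_pow (t : ℕ) (ρ : ℝ) (X : ℕ → ℝ) (i : ℕ) (hρ : 0 < ρ)
    (h1 : 0 ≤ X i) (h2 : 0 ≤ X (i + 1)) :
    Yv ρ X i ^ (2 * t + 2) = (X i * X (i + 1) / ρ) ^ (t + 1) := by
  have harg : 0 ≤ X i * X (i + 1) / ρ := div_nonneg (mul_nonneg h1 h2) hρ.le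
  rw [show 2 * t + 2 = 2 * (t + 1) by ring, pow_mul, Yv, Real.sq_sqrt harg]

lemma alg_main (t : ℕ) (ρ xm A B C : ℝ) (hρ : ρ ≠ 0)
    (h : (ρ ^ (t + 2) - C / ρ ^ (t + 2)) * xm ^ (t + 2) = A + B) :
    ρ * xm ^ (2 * t + 3)
      = A * xm ^ (t + 1) / ρ ^ (t + 1) + B * xm ^ (t + 1) / ρ ^ (t + 1)
        + C * (xm / ρ) ^ (2 * t + 3) := by
  rw [div_pow]
  field_simp at h ⊢
  linear_combination (xm ^ (t + 1) * ρ ^ (t + 1)) * h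

lemma P_eigen (t n : ℕ) (c : ℕ → ℕ) (ρ : ℝ) (X : ℕ → ℝ) (hρ : 0 < ρ)
    (hX : ∀ i, i ≤ n → 0 < X i)
    (heq : ∀ j, j ≤ n → (ρ ^ (t + 2) - (c j : ℝ) / ρ ^ (t + 2)) * X j ^ (t + 2)
        = (if j = 0 then 0 else X (j - 1) ^ (t + 2))
          + (if j < n then X (j + 1) ^ (t + 2) else 0)) :
    ∀ v ∈ verts t n c, ρ * Pv ρ X v ^ (2 * t + 3)
      = ∑ e ∈ (edges t n c).filter (fun e => v ∈ e), ∏ w ∈ e.erase v, Pv ρ X w := by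
  have hρ0 : ρ ≠ 0 := hρ.ne'
  intro v hv
  rcases verts_cases hv with ⟨m, hm, rfl⟩ | ⟨m, hm, j, hj, rfl⟩ | ⟨m, hm, cc, hcc, l, hl, rfl⟩
  · -- path vertex
    rw [Pv_pa,
      sum_edges_filter t n c (pa m) (fun e => ∏ w ∈ e.erase (pa m), Pv ρ X w),
      sum_filter_range_pa t n m hm (fun i => ∏ w ∈ (pathE t i).erase (pa m), Pv ρ X w)]
    have hpend : ∑ i ∈ Finset.range (n + 1),
        ∑ cc ∈ (Finset.range (c i)).filter (fun cc => pa m ∈ pendE t i cc),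
          (fun e => ∏ w ∈ e.erase (pa m), Pv ρ X w) (pendE t i cc)
        = (c m : ℝ) * (X m / ρ) ^ (2 * t + 3) := by
      have hterm : ∀ i ∈ Finset.range (n + 1),
          (∑ cc ∈ (Finset.range (c i)).filter (fun cc => pa m ∈ pendE t i cc),
            (fun e => ∏ w ∈ e.erase (pa m), Pv ρ X w) (pendE t i cc))
          = if i = m then (c m : ℝ) * (X m / ρ) ^ (2 * t + 3) else 0 := by
        intro i _
        by_cases him : i = m
        · subst him
          rw [if_pos rfl, Finset.filter_true_of_mem (fun cc _ => pa_mem_pendE.2 rfl)]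
          simp only
          rw [Finset.sum_congr rfl (fun cc _ => prod_pendE_erase_pa t ρ X i cc),
            Finset.sum_const, Finset.card_range, nsmul_eq_mul]
        · rw [if_neg him, Finset.filter_false_of_mem, Finset.sum_empty]
          intro cc _
          rw [pa_mem_pendE]
          omega
      rw [Finset.sum_congr rfl hterm,
        Finset.sum_ite_eq' (Finset.range (n + 1)) m (fun _ => (c m : ℝ) * (X m / ρ) ^ (2 * t + 3)),
        if_pos (Finset.mem_range.2 (by omega))]
    rw [hpend]
    have heqm := heq m hm
    by_cases hm0 : 0 < m <;> by_cases hmn : m < n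
    · rw [if_pos hm0, if_pos hmn]
      rw [if_neg (by omega : ¬ m = 0), if_pos hmn] at heqm
      have hA : ∏ w ∈ (pathE t (m - 1)).erase (pa m), Pv ρ X w
          = X (m - 1) ^ (t + 2) * X m ^ (t + 1) / ρ ^ (t + 1) := by
        have hm1 : pa m = pa ((m - 1) + 1) := by congr 1; omega
        rw [hm1, prod_pathE_erase_right,
          Yv_pow t ρ X (m - 1) hρ (hX _ (by omega)).le
            (by rw [show m - 1 + 1 = m by omega]; exact (hX _ hm).le),
          show m - 1 + 1 = m by omega, div_pow, mul_pow]
        ring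
      have hB : ∏ w ∈ (pathE t m).erase (pa m), Pv ρ X w
          = X (m + 1) ^ (t + 2) * X m ^ (t + 1) / ρ ^ (t + 1) := by
        rw [prod_pathE_erase_left,
          Yv_pow t ρ X m hρ (hX _ hm).le (hX _ (by omega)).le, div_pow, mul_pow]
        ring
      rw [hA, hB]
      exact alg_main t ρ (X m) _ _ (c m) hρ0 heqm
    · rw [if_pos hm0, if_neg hmn]
      rw [if_neg (by omega : ¬ m = 0), if_neg hmn] at heqm
      have hA : ∏ w ∈ (pathE t (m - 1)).erase (pa m), Pv ρ X w
          = X (m - 1) ^ (t + 2) * X m ^ (t + 1) / ρ ^ (t + 1) := by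
        have hm1 : pa m = pa ((m - 1) + 1) := by congr 1; omega
        rw [hm1, prod_pathE_erase_right,
          Yv_pow t ρ X (m - 1) hρ (hX _ (by omega)).le
            (by rw [show m - 1 + 1 = m by omega]; exact (hX _ hm).le),
          show m - 1 + 1 = m by omega, div_pow, mul_pow]
        ring
      rw [hA]
      have hmain := alg_main t ρ (X m) (X (m - 1) ^ (t + 2)) 0 (c m) hρ0 heqm
      simpa using hmain
    · rw [if_neg hm0, if_pos hmn]
      rw [if_pos (by omega : m = 0), if_pos hmn] at heqm
      have hB : ∏ w ∈ (pathE t m).erase (pa m), Pv ρ X w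
          = X (m + 1) ^ (t + 2) * X m ^ (t + 1) / ρ ^ (t + 1) := by
        rw [prod_pathE_erase_left,
          Yv_pow t ρ X m hρ (hX _ hm).le (hX _ (by omega)).le, div_pow, mul_pow]
        ring
      rw [hB]
      have hmain := alg_main t ρ (X m) 0 (X (m + 1) ^ (t + 2)) (c m) hρ0 heqm
      simpa using hmain
    · rw [if_neg hm0, if_neg hmn]
      rw [if_pos (by omega : m = 0), if_neg hmn] at heqm
      have hmain := alg_main t ρ (X m) 0 0 (c m) hρ0 heqm
      simpa using hmain
  · -- filler vertex
    rw [Pv_fi,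
      sum_edges_filter t n c (fi m j) (fun e => ∏ w ∈ e.erase (fi m j), Pv ρ X w)]
    have hone : (Finset.range n).filter (fun i => fi m j ∈ pathE t i) = {m} := by
      ext i
      simp only [Finset.mem_filter, Finset.mem_range, Finset.mem_singleton, fi_mem_pathE]
      omega
    have hpend : ∑ i ∈ Finset.range (n + 1),
        ∑ cc ∈ (Finset.range (c i)).filter (fun cc => fi m j ∈ pendE t i cc),
          (fun e => ∏ w ∈ e.erase (fi m j), Pv ρ X w) (pendE t i cc) = 0 := by
      refine Finset.sum_eq_zero fun i _ => ?_
      rw [Finset.filter_false_of_mem, Finset.sum_empty]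
      intro cc _
      exact fi_not_mem_pendE
    rw [hone, hpend, Finset.sum_singleton, add_zero]
    rw [prod_pathE_erase_fi t ρ X m j hj]
    have hsq : Yv ρ X m ^ 2 = X m * X (m + 1) / ρ := by
      rw [Yv, Real.sq_sqrt (div_nonneg (mul_nonneg (hX _ (by omega)).le (hX _ (by omega)).le) hρ.le)]
    rw [show 2 * t + 3 = 2 + (2 * t + 1) by ring, pow_add, hsq]
    field_simp
  · -- pendant vertex
    rw [Pv_pe,
      sum_edges_filter t n c (pe m cc l) (fun e => ∏ w ∈ e.erase (pe m cc l), Pv ρ X w)]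
    have hzero : (Finset.range n).filter (fun i => pe m cc l ∈ pathE t i) = ∅ := by
      ext i
      simp only [Finset.mem_filter, Finset.mem_range, Finset.notMem_empty, iff_false, not_and]
      intro _
      exact pe_not_mem_pathE
    have hpend : ∑ i ∈ Finset.range (n + 1),
        ∑ cc' ∈ (Finset.range (c i)).filter (fun cc' => pe m cc l ∈ pendE t i cc'),
          (fun e => ∏ w ∈ e.erase (pe m cc l), Pv ρ X w) (pendE t i cc')
        = X m * (X m / ρ) ^ (2 * t + 2) := by
      have hterm : ∀ i ∈ Finset.range (n + 1),
          (∑ cc' ∈ (Finset.range (c i)).filter (fun cc' => pe m cc l ∈ pendE t i cc'),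
            (fun e => ∏ w ∈ e.erase (pe m cc l), Pv ρ X w) (pendE t i cc'))
          = if i = m then X m * (X m / ρ) ^ (2 * t + 2) else 0 := by
        intro i _
        by_cases him : i = m
        · subst him
          rw [if_pos rfl]
          have hfil : (Finset.range (c i)).filter (fun cc' => pe i cc l ∈ pendE t i cc') = {cc} := by
            have hmem : ∀ cc' : ℕ, (pe i cc l ∈ pendE t i cc') ↔ cc = cc' := by
              intro cc'
              rw [pe_mem_pendE]
              simp [hl]
            ext cc'
            simp only [Finset.mem_filter, Finset.mem_range, Finset.mem_singleton, hmem]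
            omega
          rw [hfil, Finset.sum_singleton]
          simp only
          rw [prod_pendE_erase_pe t ρ X i cc l hl]
        · rw [if_neg him, Finset.filter_false_of_mem, Finset.sum_empty]
          intro cc' _
          rw [pe_mem_pendE]
          omega
      rw [Finset.sum_congr rfl hterm,
        Finset.sum_ite_eq' (Finset.range (n + 1)) m (fun _ => X m * (X m / ρ) ^ (2 * t + 2)),
        if_pos (Finset.mem_range.2 (by omega))]
    rw [hzero, hpend, Finset.sum_empty, zero_add]
    rw [div_pow, div_pow]
    field_simp
    ring

/-! ### Positivity and the construction bundle -/

lemma Pv_pos (t n : ℕ) (c : ℕ → ℕ) (ρ : ℝ) (X : ℕ → ℝ) (hρ : 0 < ρ)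
    (hX : ∀ i, i ≤ n → 0 < X i) :
    ∀ v ∈ verts t n c, 0 < Pv ρ X v := by
  intro v hv
  rcases verts_cases hv with ⟨m, hm, rfl⟩ | ⟨m, hm, j, hj, rfl⟩ | ⟨m, hm, cc, hcc, l, hl, rfl⟩
  · rw [Pv_pa]; exact hX m hm
  · rw [Pv_fi]
    exact Real.sqrt_pos.2 (div_pos (mul_pos (hX m (by omega)) (hX (m + 1) (by omega))) hρ)
  · rw [Pv_pe]; exact div_pos (hX m hm) hρ

lemma pa0_mem_verts (t n : ℕ) (c : ℕ → ℕ) (hne : 0 < n ∨ 0 < c 0) :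
    pa 0 ∈ verts t n c := by
  rcases hne with h | h
  · exact mem_verts.2 ⟨pathE t 0, mem_edges.2 (Or.inl ⟨0, h, rfl⟩), mem_pathE.2 (Or.inl rfl)⟩
  · exact mem_verts.2 ⟨pendE t 0 0, mem_edges.2 (Or.inr ⟨0, by omega, 0, h, rfl⟩),
      mem_pendE.2 (Or.inl rfl)⟩

theorem construction (t n : ℕ) (c : ℕ → ℕ) (ρ : ℝ) (X : ℕ → ℝ) (hρ : 0 < ρ)
    (hX : ∀ i, i ≤ n → 0 < X i)
    (heq : ∀ j, j ≤ n → (ρ ^ (t + 2) - (c j : ℝ) / ρ ^ (t + 2)) * X j ^ (t + 2)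
        = (if j = 0 then 0 else X (j - 1) ^ (t + 2))
          + (if j < n then X (j + 1) ^ (t + 2) else 0))
    (hne : 0 < n ∨ 0 < c 0) :
    (HG t n c).IsAdjHEig (-ρ) ∧ ∀ μ : ℝ, (HG t n c).IsAdjHEig μ → -ρ ≤ μ := by
  have e1 : 2 * t + 4 - 1 = 2 * t + 3 := by omega
  have hPeig : ∀ v ∈ (HG t n c).verts, ρ * Pv ρ X v ^ (2 * t + 4 - 1)
      = ∑ e ∈ (HG t n c).edges.filter (fun e => v ∈ e), ∏ w ∈ e.erase v, Pv ρ X w := by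
    intro v hv
    rw [e1]
    exact P_eigen t n c ρ X hρ hX heq v hv
  constructor
  · refine sign_flip (HG t n c) ⟨t + 1, by omega⟩ sg (Pv ρ X) sg_pm
      (sg_prod_edge t n c) ρ ⟨pa 0, pa0_mem_verts t n c hne, ?_⟩ hPeig
    rw [Pv_pa]
    exact (hX 0 (by omega)).ne'
  · intro μ hμ
    have hb := eig_bound (HG t n c) (Pv ρ X) ρ (Pv_pos t n c ρ X hρ hX) hPeig hμ
    have := neg_abs_le μ
    linarith

/-! ### Dynamics -/

noncomputable def useq (Λ : ℝ) (c : ℕ → ℕ) : ℕ → ℝ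
  | 0 => Λ - c 0 / Λ
  | (i + 1) => Λ - c (i + 1) / Λ - 1 / useq Λ c i

noncomputable def greedy (Λ : ℝ) : ℕ → ℝ × ℕ
  | 0 => (Λ - (⌊(Λ - 1 / 2) * Λ⌋₊ : ℕ) / Λ, ⌊(Λ - 1 / 2) * Λ⌋₊)
  | (i + 1) =>
      (Λ - (⌊(Λ - 1 / (greedy Λ i).1 - 1 / 2) * Λ⌋₊ : ℕ) / Λ - 1 / (greedy Λ i).1,
        ⌊(Λ - 1 / (greedy Λ i).1 - 1 / 2) * Λ⌋₊)

lemma step_bound (Λ d : ℝ) (hΛ : 4 ≤ Λ) (hd : 0 ≤ d) (hd2 : d ≤ 2) :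
    1 / 2 ≤ Λ - (⌊(Λ - d - 1 / 2) * Λ⌋₊ : ℕ) / Λ - d
      ∧ Λ - (⌊(Λ - d - 1 / 2) * Λ⌋₊ : ℕ) / Λ - d ≤ 3 / 4 := by
  have hΛ0 : (0 : ℝ) < Λ := by linarith
  have hT : (0 : ℝ) ≤ Λ - d - 1 / 2 := by linarith
  have h1 : ((⌊(Λ - d - 1 / 2) * Λ⌋₊ : ℕ) : ℝ) ≤ (Λ - d - 1 / 2) * Λ :=
    Nat.floor_le (mul_nonneg hT hΛ0.le)
  have h2 : (Λ - d - 1 / 2) * Λ - 1 < ((⌊(Λ - d - 1 / 2) * Λ⌋₊ : ℕ) : ℝ) :=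
    Nat.sub_one_lt_floor _
  have h3 : ((⌊(Λ - d - 1 / 2) * Λ⌋₊ : ℕ) : ℝ) / Λ ≤ Λ - d - 1 / 2 := by
    rw [div_le_iff₀ hΛ0]; exact h1
  have h5 : (1 / Λ) * Λ = 1 := one_div_mul_cancel hΛ0.ne'
  have h4 : Λ - d - 1 / 2 - 1 / Λ < ((⌊(Λ - d - 1 / 2) * Λ⌋₊ : ℕ) : ℝ) / Λ := by
    rw [lt_div_iff₀ hΛ0]
    nlinarith [h2]
  have h6 : 1 / Λ ≤ 1 / 4 := one_div_le_one_div_of_le (by norm_num) hΛ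
  constructor <;> linarith

lemma greedy_mem (Λ : ℝ) (hΛ : 4 ≤ Λ) :
    ∀ i, 1 / 2 ≤ (greedy Λ i).1 ∧ (greedy Λ i).1 ≤ 3 / 4 := by
  intro i
  induction i with
  | zero =>
    have h := step_bound Λ 0 hΛ (le_refl 0) (by norm_num)
    simp only [sub_zero] at h
    simpa [greedy] using h
  | succ i ih =>
    have hu0 : (0 : ℝ) < (greedy Λ i).1 := by linarith [ih.1]
    have hd : (0 : ℝ) ≤ 1 / (greedy Λ i).1 := by positivity
    have hd2 : 1 / (greedy Λ i).1 ≤ 2 := by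
      rw [div_le_iff₀ hu0]; linarith [ih.1]
    have h := step_bound Λ (1 / (greedy Λ i).1) hΛ hd hd2
    simpa [greedy] using h

lemma useq_greedy (Λ : ℝ) : ∀ i, useq Λ (fun j => (greedy Λ j).2) i = (greedy Λ i).1 := by
  intro i
  induction i with
  | zero => simp [useq, greedy]
  | succ i ih => simp only [useq, greedy]; rw [ih]

lemma useq_mono (c : ℕ → ℕ) {Λ₁ Λ₂ : ℝ} (h1 : 1 ≤ Λ₁) (h12 : Λ₁ ≤ Λ₂) :
    ∀ i, (∀ j < i, 0 < useq Λ₁ c j) → Λ₂ - Λ₁ ≤ useq Λ₂ c i - useq Λ₁ c i := by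
  have hΛ1 : (0 : ℝ) < Λ₁ := by linarith
  intro i
  induction i with
  | zero =>
    intro _
    simp only [useq]
    have hc : (c 0 : ℝ) / Λ₂ ≤ (c 0 : ℝ) / Λ₁ :=
      div_le_div_of_nonneg_left (Nat.cast_nonneg _) hΛ1 h12
    linarith
  | succ i ih =>
    intro hpos
    have hU1 : 0 < useq Λ₁ c i := hpos i (by omega)
    have hd := ih (fun j hj => hpos j (by omega))
    have hU2 : 0 < useq Λ₂ c i := by linarith
    have hc : (c (i + 1) : ℝ) / Λ₂ ≤ (c (i + 1) : ℝ) / Λ₁ :=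
      div_le_div_of_nonneg_left (Nat.cast_nonneg _) hΛ1 h12
    have hinv : 1 / useq Λ₂ c i ≤ 1 / useq Λ₁ c i :=
      one_div_le_one_div_of_le hU1 (by linarith)
    simp only [useq]
    linarith

lemma crash (c : ℕ → ℕ) {Λs Λμ : ℝ} (h1 : 1 ≤ Λμ) (hlt : Λμ < Λs)
    (hub : ∀ i, 0 < useq Λs c i ∧ useq Λs c i ≤ 3 / 4) :
    ∃ j ≤ ⌈1 / (Λs - Λμ)⌉₊, useq Λμ c j ≤ 0 := by
  by_contra hcon
  push_neg at hcon
  set δ := Λs - Λμ with hδ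
  have hδ0 : 0 < δ := by rw [hδ]; linarith
  set N := ⌈1 / δ⌉₊ with hN
  have key : ∀ i ≤ N, ((i : ℝ) + 1) * δ ≤ useq Λs c i - useq Λμ c i := by
    intro i
    induction i with
    | zero =>
      intro _
      have h := useq_mono c h1 hlt.le 0 (fun j hj => absurd hj (by omega))
      push_cast
      rw [hδ]
      linarith
    | succ i ih =>
      intro hiN
      have hind := ih (by omega)
      have hu1 : 0 < useq Λμ c i := hcon i (by omega)
      have hu2pos := (hub i).1
      have hu2ub := (hub i).2
      have hipos : (0 : ℝ) < ((i : ℝ) + 1) * δ := by positivity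
      have hdiff : 0 < useq Λs c i - useq Λμ c i := lt_of_lt_of_le hipos hind
      have huμub : useq Λμ c i ≤ 3 / 4 := by linarith
      have hprod : useq Λμ c i * useq Λs c i ≤ 1 := by nlinarith
      have hinv : useq Λs c i - useq Λμ c i ≤ 1 / useq Λμ c i - 1 / useq Λs c i := by
        have hexp : 1 / useq Λμ c i - 1 / useq Λs c i
            = (useq Λs c i - useq Λμ c i) / (useq Λμ c i * useq Λs c i) := by
          field_simp
        rw [hexp, le_div_iff₀ (by positivity)]
        nlinarith [hprod, hdiff.le]
      have hc : (c (i + 1) : ℝ) / Λs ≤ (c (i + 1) : ℝ) / Λμ :=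
        div_le_div_of_nonneg_left (Nat.cast_nonneg _) (by linarith) hlt.le
      simp only [useq]
      push_cast
      have hδeq : Λs - Λμ = δ := rfl
      nlinarith [hind, hinv, hc]
  have hNδ : 1 ≤ (N : ℝ) * δ := by
    have hce := Nat.le_ceil (1 / δ)
    have h1δ : (1 / δ) * δ = 1 := one_div_mul_cancel hδ0.ne'
    nlinarith [hce]
  have hkeyN := key N (le_refl N)
  have h1' := hcon N (le_refl N)
  have h2' := (hub N).2
  have hexpand : ((N : ℝ) + 1) * δ = (N : ℝ) * δ + δ := by ring
  linarith

lemma useq_contAt (c : ℕ → ℕ) {Λ₀ : ℝ} (h0 : Λ₀ ≠ 0) :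
    ∀ i, (∀ j < i, useq Λ₀ c j ≠ 0) → ContinuousAt (fun Λ => useq Λ c i) Λ₀ := by
  intro i
  induction i with
  | zero =>
    intro _
    have heq : (fun Λ => useq Λ c 0) = fun Λ : ℝ => Λ - (c 0 : ℝ) / Λ := by
      funext Λ; simp [useq]
    rw [heq]
    exact continuousAt_id.sub (continuousAt_const.div continuousAt_id h0)
  | succ i ih =>
    intro hpos
    have heq : (fun Λ => useq Λ c (i + 1))
        = fun Λ : ℝ => Λ - (c (i + 1) : ℝ) / Λ - 1 / useq Λ c i := by
      funext Λ; simp [useq]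
    rw [heq]
    exact (continuousAt_id.sub (continuousAt_const.div continuousAt_id h0)).sub
      (continuousAt_const.div (ih (fun j hj => hpos j (by omega))) (hpos i (by omega)))

lemma threshold (c : ℕ → ℕ) {Λμ Λs : ℝ} (h1 : 1 ≤ Λμ) (hlt : Λμ < Λs) (N : ℕ)
    (hposs : ∀ j, 0 < useq Λs c j)
    (hcrash : ∃ j ≤ N, useq Λμ c j ≤ 0) :
    ∃ Λ₀, Λμ ≤ Λ₀ ∧ Λ₀ < Λs ∧ ∃ n ≤ N, useq Λ₀ c n = 0 ∧ ∀ j < n, 0 < useq Λ₀ c j := by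
  set S : Set ℝ := {Λ | (Λμ ≤ Λ ∧ Λ ≤ Λs) ∧ ∀ j ≤ N, 0 < useq Λ c j} with hS
  have hSs : Λs ∈ S := ⟨⟨hlt.le, le_refl _⟩, fun j _ => hposs j⟩
  have hSne : S.Nonempty := ⟨Λs, hSs⟩
  have hbdd : BddBelow S := ⟨Λμ, fun x hx => hx.1.1⟩
  set Λ₀ := sInf S with hΛ₀
  have hΛ₀l : Λμ ≤ Λ₀ := le_csInf hSne (fun x hx => hx.1.1)
  have hΛ₀u : Λ₀ ≤ Λs := csInf_le hbdd hSs
  have h1₀ : 1 ≤ Λ₀ := le_trans h1 hΛ₀l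
  have h0 : Λ₀ ≠ 0 := by intro h; rw [h] at h1₀; linarith
  have hup : ∀ Λ, Λ ∈ S → ∀ Λ', Λ ≤ Λ' → Λ' ≤ Λs → Λ' ∈ S := by
    intro Λ hΛ Λ' hle hle'
    refine ⟨⟨le_trans hΛ.1.1 hle, hle'⟩, fun j hj => ?_⟩
    have hm := useq_mono c (le_trans h1 hΛ.1.1) hle j (fun j' hj' => hΛ.2 j' (by omega))
    have := hΛ.2 j hj
    linarith
  have hIoc : ∀ Λ, Λ₀ < Λ → Λ ≤ Λs → Λ ∈ S := by
    intro Λ hl hu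
    obtain ⟨y, hy, hylt⟩ := exists_lt_of_csInf_lt hSne hl
    exact hup y hy Λ hylt.le hu
  by_cases hex : ∃ j, j ≤ N ∧ useq Λ₀ c j ≤ 0
  · obtain ⟨hnN, hn0⟩ := Nat.find_spec hex
    have hpre : ∀ j < Nat.find hex, 0 < useq Λ₀ c j := by
      intro j hj
      have hmin := Nat.find_min hex hj
      push_neg at hmin
      exact hmin (by omega)
    have hlt0 : Λ₀ < Λs := by
      rcases eq_or_lt_of_le hΛ₀u with heq | h
      · exfalso
        have hp := hposs (Nat.find hex)
        rw [← heq] at hp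
        linarith
      · exact h
    have hcont : ContinuousAt (fun Λ => useq Λ c (Nat.find hex)) Λ₀ :=
      useq_contAt c h0 _ (fun j hj => (hpre j hj).ne')
    have hge : 0 ≤ useq Λ₀ c (Nat.find hex) := by
      have hev : ∀ᶠ Λ in nhdsWithin Λ₀ (Set.Ioi Λ₀), 0 ≤ useq Λ c (Nat.find hex) := by
        filter_upwards [Ioc_mem_nhdsGT_of_mem (⟨le_refl Λ₀, hlt0⟩ : Λ₀ ∈ Set.Ico Λ₀ Λs)]
          with Λ hΛ
        exact ((hIoc Λ hΛ.1 hΛ.2).2 _ hnN).le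
      exact ge_of_tendsto hcont.continuousWithinAt hev
    exact ⟨Λ₀, hΛ₀l, hlt0, Nat.find hex, hnN, le_antisymm hn0 hge, hpre⟩
  · exfalso
    push_neg at hex
    have hposΛ₀ : ∀ j ≤ N, 0 < useq Λ₀ c j := fun j hj => hex j hj
    have hev : ∀ᶠ Λ in nhds Λ₀, ∀ j ∈ Finset.range (N + 1), 0 < useq Λ c j := by
      rw [Finset.eventually_all]
      intro j hj
      rw [Finset.mem_range] at hj
      have hc := useq_contAt c h0 j (fun j' hj' => (hposΛ₀ j' (by omega)).ne')
      exact hc.eventually (eventually_gt_nhds (hposΛ₀ j (by omega)))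
    obtain ⟨ε, hε, hball⟩ := Metric.eventually_nhds_iff_ball.1 hev
    rcases eq_or_lt_of_le hΛ₀l with heq | hlt'
    · obtain ⟨j, hj, hj0⟩ := hcrash
      have hp := hposΛ₀ j hj
      rw [← heq] at hp
      linarith
    · have hΛlt : max Λμ (Λ₀ - ε / 2) < Λ₀ := by
        apply max_lt hlt'
        linarith
      have hΛball : max Λμ (Λ₀ - ε / 2) ∈ Metric.ball Λ₀ ε := by
        rw [Metric.mem_ball, Real.dist_eq, abs_lt]
        constructor
        · have : Λ₀ - ε / 2 ≤ max Λμ (Λ₀ - ε / 2) := le_max_right _ _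
          linarith
        · linarith
      have hΛS : max Λμ (Λ₀ - ε / 2) ∈ S := by
        refine ⟨⟨le_max_left _ _, by linarith⟩, fun j hj => ?_⟩
        exact hball _ hΛball j (Finset.mem_range.2 (by omega))
      have := csInf_le hbdd hΛS
      linarith

end Stmt17Aux

open Stmt17Aux

/-- for even `k ≥ 4`, every real `r ≤ -√(2+√5)` is a limit point of the least
adjacency H-eigenvalues of `k`-uniform hypergraphs. -/
theorem stmt17 (k : ℕ) (hk : 4 ≤ k) (hke : Even k)
    (r : ℝ) (hr : r ≤ -Real.sqrt (2 + Real.sqrt 5)) :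
    ∃ (H : ℕ → UniformHypergraph k) (lam : ℕ → ℝ),
      (∀ n : ℕ, (H n).IsAdjHEig (lam n) ∧
        ∀ μ : ℝ, (H n).IsAdjHEig μ → lam n ≤ μ) ∧
      Filter.Tendsto lam Filter.atTop (nhds r) := by
  
  obtain ⟨t, rfl⟩ : ∃ t, k = 2 * t + 4 := by
    rcases hke with ⟨s, hs⟩
    exact ⟨(k - 4) / 2, by omega⟩
  have hsqrt5 : (2.1 : ℝ) ≤ Real.sqrt 5 := (Real.le_sqrt' (by norm_num)).2 (by norm_num)
  have h2s : (4.1 : ℝ) ≤ 2 + Real.sqrt 5 := by linarith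
  have hlam1 : (2.02 : ℝ) ≤ Real.sqrt (2 + Real.sqrt 5) :=
    (Real.le_sqrt' (by norm_num)).2 (by nlinarith)
  set lam0 : ℝ := -r with hlam0
  have hlam : (2.02 : ℝ) ≤ lam0 := by
    have : Real.sqrt (2 + Real.sqrt 5) ≤ lam0 := by rw [hlam0]; linarith
    linarith
  have main : ∀ m : ℕ, ∃ (H : UniformHypergraph (2 * t + 4)) (ρ : ℝ),
      (H.IsAdjHEig (-ρ) ∧ ∀ μ : ℝ, H.IsAdjHEig μ → -ρ ≤ μ)
        ∧ lam0 - 1 / ((m : ℝ) + 1) ≤ ρ ∧ ρ ≤ lam0 := by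
    intro m
    set ε : ℝ := 1 / ((m : ℝ) + 1) with hε
    have hε0 : 0 < ε := by positivity
    have hε1 : ε ≤ 1 := by
      rw [hε, div_le_one (by positivity)]
      have := Nat.cast_nonneg (α := ℝ) m
      linarith
    set μ : ℝ := lam0 - ε with hμdef
    have hμ1 : 1 < μ := by rw [hμdef]; linarith
    have hμlt : μ < lam0 := by rw [hμdef]; linarith
    have hlam0pos : (0 : ℝ) < lam0 := by linarith
    set Λs : ℝ := lam0 ^ (t + 2) with hΛs
    set Λμ : ℝ := μ ^ (t + 2) with hΛμ
    have hΛs4 : (4 : ℝ) ≤ Λs := by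
      have h1 : lam0 ^ 2 ≤ lam0 ^ (t + 2) := pow_le_pow_right₀ (by linarith) (by omega)
      nlinarith
    have hΛμ1 : (1 : ℝ) ≤ Λμ := one_le_pow₀ hμ1.le
    have hΛlt : Λμ < Λs := pow_lt_pow_left₀ hμlt (by linarith) (by omega)
    set c : ℕ → ℕ := fun i => (greedy Λs i).2 with hc
    have hgr := greedy_mem Λs hΛs4
    have hus : ∀ i, useq Λs c i = (greedy Λs i).1 := useq_greedy Λs
    have hub : ∀ i, 0 < useq Λs c i ∧ useq Λs c i ≤ 3 / 4 := by
      intro i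
      rw [hus i]
      exact ⟨by linarith [(hgr i).1], (hgr i).2⟩
    have hposs : ∀ i, 0 < useq Λs c i := fun i => (hub i).1
    obtain ⟨j0, hj0N, hj0⟩ := crash c hΛμ1 hΛlt hub
    obtain ⟨Λ₀, hΛ₀l, hΛ₀u, n, hnN, hzero, hpre⟩ :=
      threshold c hΛμ1 hΛlt _ hposs ⟨j0, hj0N, hj0⟩
    have hΛ₀1 : (1 : ℝ) ≤ Λ₀ := le_trans hΛμ1 hΛ₀l
    have hΛ₀pos : (0 : ℝ) < Λ₀ := by linarith
    set ρ : ℝ := Λ₀ ^ ((t + 2 : ℝ))⁻¹ with hρdef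
    have hρpos : 0 < ρ := Real.rpow_pos_of_pos hΛ₀pos _
    have hexp1 : ((t + 2 : ℝ))⁻¹ * ((t + 2 : ℕ) : ℝ) = 1 := by
      push_cast
      field_simp
    have hpowinv : ∀ x : ℝ, 0 ≤ x → (x ^ (t + 2)) ^ ((t + 2 : ℝ))⁻¹ = x := by
      intro x hx
      rw [← Real.rpow_natCast x (t + 2), ← Real.rpow_mul hx,
        show ((t + 2 : ℕ) : ℝ) * ((t + 2 : ℝ))⁻¹ = 1 by push_cast; field_simp, Real.rpow_one]
    have hρpow : ρ ^ (t + 2) = Λ₀ := by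
      rw [hρdef, ← Real.rpow_natCast (Λ₀ ^ ((t + 2 : ℝ))⁻¹) (t + 2),
        ← Real.rpow_mul hΛ₀pos.le, hexp1, Real.rpow_one]
    have hρle : ρ ≤ lam0 := by
      calc ρ ≤ Λs ^ ((t + 2 : ℝ))⁻¹ :=
            Real.rpow_le_rpow hΛ₀pos.le hΛ₀u.le (by positivity)
        _ = lam0 := by rw [hΛs]; exact hpowinv lam0 hlam0pos.le
    have hρge : μ ≤ ρ := by
      calc μ = Λμ ^ ((t + 2 : ℝ))⁻¹ := (hpowinv μ (by linarith)).symm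
        _ ≤ ρ := Real.rpow_le_rpow (by positivity) hΛ₀l (by positivity)
    set w : ℕ → ℝ := fun jj => ∏ i ∈ Finset.range jj, useq Λ₀ c i with hw
    have hwpos : ∀ jj, jj ≤ n → 0 < w jj := by
      intro jj hjj
      rw [hw]
      exact Finset.prod_pos fun i hi => hpre i (by rw [Finset.mem_range] at hi; omega)
    set X : ℕ → ℝ := fun i => (w i) ^ ((t + 2 : ℝ))⁻¹ with hX
    have hXpos : ∀ i, i ≤ n → 0 < X i := fun i hi => Real.rpow_pos_of_pos (hwpos i hi) _
    have hXpow : ∀ i, i ≤ n → X i ^ (t + 2) = w i := by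
      intro i hi
      rw [hX]
      simp only
      rw [← Real.rpow_natCast ((w i) ^ ((t + 2 : ℝ))⁻¹) (t + 2),
        ← Real.rpow_mul (hwpos i hi).le, hexp1, Real.rpow_one]
    have hwsucc : ∀ j : ℕ, w (j + 1) = useq Λ₀ c j * w j := by
      intro j
      rw [hw]
      simp only [Finset.prod_range_succ]
      ring
    have hw0 : w 0 = 1 := by rw [hw]; simp
    have heqw : ∀ j, j ≤ n → (Λ₀ - (c j : ℝ) / Λ₀) * w j
        = (if j = 0 then 0 else w (j - 1)) + (if j < n then w (j + 1) else 0) := by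
      intro j hj
      rcases Nat.lt_or_ge j n with hjn | hjn
      · rcases Nat.eq_zero_or_pos j with rfl | hj0
        · rw [if_pos rfl, if_pos hjn, hwsucc 0, hw0]
          simp [useq]
        · obtain ⟨j', rfl⟩ : ∃ j', j = j' + 1 := ⟨j - 1, by omega⟩
          rw [if_neg (by omega), if_pos hjn, hwsucc (j' + 1), hwsucc j',
            show j' + 1 - 1 = j' by omega]
          have hu' : 0 < useq Λ₀ c j' := hpre j' (by omega)
          have hueq : useq Λ₀ c (j' + 1)
              = Λ₀ - (c (j' + 1) : ℝ) / Λ₀ - 1 / useq Λ₀ c j' := by simp [useq]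
          rw [hueq]
          field_simp
          ring
      · have hjn' : j = n := by omega
        subst hjn'
        rcases Nat.eq_zero_or_pos j with rfl | hj0
        · rw [if_pos rfl, if_neg (lt_irrefl 0), hw0]
          have hz : Λ₀ - (c 0 : ℝ) / Λ₀ = 0 := by
            have := hzero
            simpa [useq] using this
          rw [hz]
          ring
        · obtain ⟨n', rfl⟩ : ∃ n', j = n' + 1 := ⟨j - 1, by omega⟩
          rw [if_neg (by omega), if_neg (lt_irrefl _), hwsucc n',
            show n' + 1 - 1 = n' by omega]
          have hu' : 0 < useq Λ₀ c n' := hpre n' (by omega)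
          have hueq : useq Λ₀ c (n' + 1)
              = Λ₀ - (c (n' + 1) : ℝ) / Λ₀ - 1 / useq Λ₀ c n' := by simp [useq]
          have h0' : Λ₀ - (c (n' + 1) : ℝ) / Λ₀ - 1 / useq Λ₀ c n' = 0 := by
            rw [← hueq]; exact hzero
          have hstep : Λ₀ - (c (n' + 1) : ℝ) / Λ₀ = 1 / useq Λ₀ c n' := by linarith
          rw [hstep]
          field_simp
          ring
    have heqX : ∀ j, j ≤ n → (ρ ^ (t + 2) - (c j : ℝ) / ρ ^ (t + 2)) * X j ^ (t + 2)
        = (if j = 0 then 0 else X (j - 1) ^ (t + 2))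
          + (if j < n then X (j + 1) ^ (t + 2) else 0) := by
      intro j hj
      rw [hρpow, hXpow j hj]
      have e1 : (if j = 0 then (0 : ℝ) else X (j - 1) ^ (t + 2))
          = (if j = 0 then 0 else w (j - 1)) := by
        by_cases h : j = 0
        · simp [h]
        · rw [if_neg h, if_neg h, hXpow (j - 1) (by omega)]
      have e2 : (if j < n then X (j + 1) ^ (t + 2) else (0 : ℝ))
          = (if j < n then w (j + 1) else 0) := by
        by_cases h : j < n
        · rw [if_pos h, if_pos h, hXpow (j + 1) (by omega)]
        · rw [if_neg h, if_neg h]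
      rw [e1, e2]
      exact heqw j hj
    have hne : 0 < n ∨ 0 < c 0 := by
      rcases Nat.eq_zero_or_pos n with rfl | hn0
      · right
        by_contra hc0
        push_neg at hc0
        have hc00 : c 0 = 0 := by omega
        have hΛeq : useq Λ₀ c 0 = Λ₀ := by simp [useq, hc00]
        rw [hzero] at hΛeq
        linarith
      · left; exact hn0
    obtain ⟨hEig, hMin⟩ := construction t n c ρ X hρpos hXpos heqX hne
    refine ⟨HG t n c, ρ, ⟨hEig, hMin⟩, ?_, hρle⟩
    rw [hμdef] at hρge
    rw [hε] at hρge
    linarith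
  choose H ρf hprop hge hle using main
  refine ⟨H, fun m => -(ρf m), fun m => hprop m, ?_⟩
  have hr' : r = -lam0 := by rw [hlam0]; ring
  rw [hr']
  have h1 : Filter.Tendsto (fun m : ℕ => ρf m) Filter.atTop (nhds lam0) := by
    apply tendsto_of_tendsto_of_tendsto_of_le_of_le
      (g := fun m : ℕ => lam0 - 1 / ((m : ℝ) + 1)) (h := fun _ : ℕ => lam0)
    · have h0 := tendsto_one_div_add_atTop_nhds_zero_nat (𝕜 := ℝ)
      have h2 := Filter.Tendsto.const_sub lam0 h0
      simpa using h2
    · exact tendsto_const_nhds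
    · exact hge
    · exact hle
  exact h1.neg
end

section
/- Let k ≥ 4 be an even integer. Then there exists a sequence (H_n) of k-uniform hypergraphs, each of which is not odd-bipartite, and a sequence (λ_n) of real numbers such that for each n, λ_n is an adjacency H-eigenvalue of H_n with λ_n ≤ μ for every adjacency H-eigenvalue μ of H_n (i.e., λ_n is the least adjacency H-eigenvalue of H_n), and λ_n → −√(2+√5) as n → ∞. In other words, −√(2+√5) is a limit point of the least adjacency H-eigenvalues of non-odd-bipartite k-uniform hypergraphs. -/
open Finset

/-- The hypergraph `H` is odd-bipartite: some vertex subset `V₁` meets every edge in an odd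
number of vertices. -/
def UniformHypergraph.OddBipartite {k : ℕ} (H : UniformHypergraph k) : Prop :=
  ∃ V₁ : Finset ℕ, ∀ e ∈ H.edges, Odd ((e ∩ V₁).card)

namespace Stmt19Aux


noncomputable def th : ℝ := Real.sqrt (2 + Real.sqrt 5)
noncomputable def ga : ℝ := (th + th⁻¹) / 2

lemma s5_sq : Real.sqrt 5 ^ 2 = 5 := Real.sq_sqrt (by norm_num)
lemma s5_gt : (2:ℝ) < Real.sqrt 5 := by
  nlinarith [s5_sq, Real.sqrt_nonneg 5]
lemma th_sq : th ^ 2 = 2 + Real.sqrt 5 := by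
  have h5 : (0:ℝ) ≤ Real.sqrt 5 := Real.sqrt_nonneg 5
  exact Real.sq_sqrt (by linarith)
lemma th_gt : (2:ℝ) < th := by
  have h := th_sq
  have hnn : (0:ℝ) ≤ th := Real.sqrt_nonneg _
  nlinarith [s5_gt]
lemma th_pos : (0:ℝ) < th := by linarith [th_gt]
lemma th_ne : th ≠ 0 := ne_of_gt th_pos
lemma thi_sq : th⁻¹ ^ 2 = Real.sqrt 5 - 2 := by
  have h1 : th⁻¹ ^ 2 = (th ^ 2)⁻¹ := by
    rw [← inv_pow]
  rw [h1, th_sq]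
  exact inv_eq_of_mul_eq_one_right (by nlinarith [s5_sq])
lemma ga_pos : (0:ℝ) < ga := by
  have h1 := th_pos
  have h2 : (0:ℝ) < th⁻¹ := inv_pos.mpr th_pos
  unfold ga; linarith
lemma ga_gt_one : (1:ℝ) < ga := by
  have h2 := th_gt
  have h3 : th * th⁻¹ = 1 := mul_inv_cancel₀ th_ne
  have h4 : (0:ℝ) < th⁻¹ := inv_pos.mpr th_pos
  unfold ga
  nlinarith
lemma ga_sq : ga ^ 2 = th * ga - 1 := by
  have h3 : th * th⁻¹ = 1 := mul_inv_cancel₀ th_ne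
  have h1 := th_sq
  have h2 := thi_sq
  unfold ga
  nlinarith
lemma two_ga_sq : 2 * ga ^ 2 = th ^ 2 - 1 := by
  have h3 : th * th⁻¹ = 1 := mul_inv_cancel₀ th_ne
  have h1 := th_sq
  have h2 := thi_sq
  unfold ga
  nlinarith
lemma ga_mul : ga * (th - ga) = 1 := by nlinarith [ga_sq]
lemma ga_inv : ga⁻¹ = th - ga := by
  have h := ga_mul
  have hg := ga_pos
  field_simp
  nlinarith
lemma two_ga : 2 * ga = th + th⁻¹ := by unfold ga; ring
lemma th_sub_two_ga_inv : th - 2 * ga⁻¹ = th⁻¹ := by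
  rw [ga_inv]
  have h2 := two_ga
  linarith
lemma ga_inv_pos : (0:ℝ) < ga⁻¹ := inv_pos.mpr ga_pos
lemma ga_inv_lt_one : ga⁻¹ < 1 := by
  rw [inv_lt_one_iff₀]; right; exact ga_gt_one


lemma th4 : th^4 = 4*th^2 + 1 := by
  nlinarith [th_sq, s5_sq]


/-- Edge list of the graph T(1,N,N) ⊔ K₃ on vertices 0..2N+4.
Path `0,…,2N` with a pendant `2N+1` attached at center `N`;
triangle on `2N+2, 2N+3, 2N+4`. -/
def GE (N : ℕ) : Finset (ℕ × ℕ) :=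
  ((Finset.range (2*N)).image fun i => (i, i+1)) ∪
    ({(N, 2*N+1), (2*N+2, 2*N+3), (2*N+3, 2*N+4), (2*N+2, 2*N+4)} : Finset (ℕ × ℕ))

lemma mem_GE {N : ℕ} {p : ℕ × ℕ} :
    p ∈ GE N ↔ (∃ i < 2*N, p = (i, i+1)) ∨ p = (N, 2*N+1) ∨
      p = (2*N+2, 2*N+3) ∨ p = (2*N+3, 2*N+4) ∨ p = (2*N+2, 2*N+4) := by
  simp only [GE, Finset.mem_union, Finset.mem_image, Finset.mem_range, Finset.mem_insert,
    Finset.mem_singleton]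
  constructor
  · rintro (⟨i, hi, rfl⟩ | h | h | h | h)
    · exact Or.inl ⟨i, hi, rfl⟩
    all_goals tauto
  · rintro (⟨i, hi, rfl⟩ | h | h | h | h)
    · exact Or.inl ⟨i, hi, rfl⟩
    all_goals tauto

lemma GE_lt {N : ℕ} {p : ℕ × ℕ} (hp : p ∈ GE N) : p.1 < p.2 ∧ p.2 < 2*N+5 := by
  rw [mem_GE] at hp
  rcases hp with ⟨i, hi, rfl⟩ | rfl | rfl | rfl | rfl <;> simp <;> omega

/-- the group of a graph vertex -/
def grp (q i : ℕ) : Finset ℕ := Finset.Ico (q*i) (q*i+q)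

lemma grp_card {q i : ℕ} : (grp q i).card = q := by simp [grp]

lemma mem_grp_div {q i v : ℕ} (hq : 0 < q) (hv : v ∈ grp q i) : v / q = i := by
  simp only [grp, mem_Ico] at hv
  refine Nat.div_eq_of_lt_le (le_of_eq_of_le (Nat.mul_comm i q) hv.1) ?_
  rw [Nat.succ_mul, Nat.mul_comm i q]
  exact hv.2

lemma self_mem_grp {q i : ℕ} (hq : 0 < q) : q*i ∈ grp q i := by
  simp [grp]; omega

lemma grp_disj {q i j : ℕ} (hq : 0 < q) (hij : i ≠ j) : Disjoint (grp q i) (grp q j) := by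
  rw [Finset.disjoint_left]
  intro v hvi hvj
  exact hij ((mem_grp_div hq hvi).symm.trans (mem_grp_div hq hvj))

lemma grp_subset_range {q i m : ℕ} (him : i < m) : grp q i ⊆ Finset.range (q*m) := by
  intro v hv
  simp only [grp, mem_Ico] at hv
  simp only [mem_range]
  have : q*i + q ≤ q*m := by nlinarith
  omega

/-- membership in a union of two groups determines the index -/
lemma mem_grp_union {q a b v i : ℕ} (hq : 0 < q) (hvi : v ∈ grp q i) :
    v ∈ grp q a ∪ grp q b ↔ a = i ∨ b = i := by
  constructor
  · intro h
    rcases Finset.mem_union.mp h with h | h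
    · exact Or.inl ((mem_grp_div hq h).symm.trans (mem_grp_div hq hvi))
    · exact Or.inr ((mem_grp_div hq h).symm.trans (mem_grp_div hq hvi))
  · rintro (rfl | rfl)
    · exact Finset.mem_union_left _ hvi
    · exact Finset.mem_union_right _ hvi

lemma grp_union_inj {q : ℕ} (hq : 0 < q) {a b c d : ℕ} (hab : a < b) (hcd : c < d)
    (h : grp q a ∪ grp q b = grp q c ∪ grp q d) : a = c ∧ b = d := by
  have h1 : c = a ∨ d = a := by
    rw [← mem_grp_union hq (self_mem_grp hq (i := a)), ← h]
    exact Finset.mem_union_left _ (self_mem_grp hq)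
  have h2 : c = b ∨ d = b := by
    rw [← mem_grp_union hq (self_mem_grp hq (i := b)), ← h]
    exact Finset.mem_union_right _ (self_mem_grp hq)
  have h3 : a = c ∨ b = c := by
    rw [← mem_grp_union hq (self_mem_grp hq (i := c)), h]
    exact Finset.mem_union_left _ (self_mem_grp hq)
  omega

/-- The hypergraph: the (2q)-th generalized power of the graph `GE N`. -/
def HG (q N : ℕ) (hq : 0 < q) : UniformHypergraph (2*q) where
  verts := Finset.range (q*(2*N+5))
  edges := (GE N).image fun p => grp q p.1 ∪ grp q p.2
  subset_verts := by
    intro e he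
    rcases Finset.mem_image.mp he with ⟨p, hp, rfl⟩
    have h := GE_lt hp
    exact Finset.union_subset (grp_subset_range (by omega)) (grp_subset_range h.2)
  uniform := by
    intro e he
    rcases Finset.mem_image.mp he with ⟨p, hp, rfl⟩
    have h := GE_lt hp
    rw [Finset.card_union_of_disjoint (grp_disj hq (by omega))]
    simp [grp_card]; ring


lemma HG_verts (q N : ℕ) (hq : 0 < q) : (HG q N hq).verts = Finset.range (q*(2*N+5)) := rfl

lemma HG_edges (q N : ℕ) (hq : 0 < q) :
    (HG q N hq).edges = (GE N).image fun p => grp q p.1 ∪ grp q p.2 := rfl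

lemma GE_def (N : ℕ) : GE N =
  ((Finset.range (2*N)).image fun i => (i, i+1)) ∪
    ({(N, 2*N+1), (2*N+2, 2*N+3), (2*N+3, 2*N+4), (2*N+2, 2*N+4)} : Finset (ℕ × ℕ)) := rfl




/-- graph adjacency sum: `(A s) i` -/
noncomputable def Bsum (N : ℕ) (s : ℕ → ℝ) (i : ℕ) : ℝ :=
  ∑ p ∈ GE N, ((if p.1 = i then s p.2 else 0) + (if p.2 = i then s p.1 else 0))

/-- The key sum computation for the hypergraph eigen-equation at `v ∈ grp q i`. -/
lemma hyper_sum (q N : ℕ) (hq : 0 < q) (x : ℕ → ℝ) {v i : ℕ} (hvi : v ∈ grp q i) :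
    ∑ e ∈ ((HG q N hq).edges.filter (fun e => v ∈ e)), ∏ w ∈ e.erase v, x w
      = (∏ w ∈ (grp q i).erase v, x w) * Bsum N (fun j => ∏ w ∈ grp q j, x w) i := by
  have himg := Finset.sum_image (s := GE N) (g := fun p => grp q p.1 ∪ grp q p.2)
      (f := fun e => if v ∈ e then ∏ w ∈ e.erase v, x w else 0)
      (fun p1 h1 p2 h2 h => by
        have l1 := GE_lt h1; have l2 := GE_lt h2
        have := grp_union_inj hq l1.1 l2.1 h
        exact Prod.ext this.1 this.2)
  rw [HG_edges, Finset.sum_filter, himg, Bsum, Finset.mul_sum]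
  refine Finset.sum_congr rfl (fun p hp => ?_)
  have hlt := (GE_lt hp).1
  by_cases h1 : p.1 = i
  · have h2 : ¬ (p.2 = i) := by omega
    rw [if_pos ((mem_grp_union hq hvi).mpr (Or.inl h1)), if_pos h1, if_neg h2, h1]
    have hdisj : Disjoint ((grp q i).erase v) (grp q p.2) :=
      Finset.disjoint_of_subset_left (Finset.erase_subset _ _) (grp_disj hq (by omega))
    have hnm : v ∉ grp q p.2 := fun hc =>
      h2 ((mem_grp_div hq hc).symm.trans (mem_grp_div hq hvi))
    rw [Finset.erase_union_distrib, Finset.erase_eq_of_notMem hnm,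
      Finset.prod_union hdisj]
    ring
  · by_cases h2 : p.2 = i
    · rw [if_pos ((mem_grp_union hq hvi).mpr (Or.inr h2)), if_neg h1, if_pos h2, h2]
      have hdisj : Disjoint (grp q p.1) ((grp q i).erase v) :=
        Finset.disjoint_of_subset_right (Finset.erase_subset _ _) (grp_disj hq (by omega))
      have hnm : v ∉ grp q p.1 := fun hc =>
        h1 ((mem_grp_div hq hc).symm.trans (mem_grp_div hq hvi))
      rw [Finset.erase_union_distrib, Finset.erase_eq_of_notMem hnm,
        Finset.prod_union hdisj]
      ring
    · rw [if_neg (fun hc => by rcases (mem_grp_union hq hvi).mp hc with h | h; exacts [h1 h, h2 h]),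
        if_neg h1, if_neg h2]
      ring

namespace Part4

noncomputable def sgn (r : ℝ) : ℝ := if r < 0 then -1 else if r = 0 then 0 else 1

lemma sgn_mul_abs (r : ℝ) : sgn r * |r| = r := by
  unfold sgn
  rcases lt_trichotomy r 0 with h | h | h
  · rw [if_pos h, abs_of_neg h]; ring
  · simp [h]
  · rw [if_neg (by linarith), if_neg (by linarith), abs_of_pos h]; ring

lemma sgn_sq {r : ℝ} (h : r ≠ 0) : sgn r ^ 2 = 1 := by
  unfold sgn
  rcases lt_trichotomy r 0 with h' | h' | h'
  · rw [if_pos h']; ring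
  · exact absurd h' h
  · rw [if_neg (by linarith), if_neg h]; ring

lemma sgn_mul_self {r : ℝ} (h : r ≠ 0) : sgn r * r = |r| := by
  nth_rewrite 2 [← sgn_mul_abs r]
  rw [← mul_assoc, ← sq, sgn_sq h, one_mul]

end Part4

open Part4

/-- eigenvector for the power hypergraph built from a graph eigenvector -/
noncomputable def xvec (q : ℕ) (s : ℕ → ℝ) (v : ℕ) : ℝ :=
  (if v = q*(v/q) then sgn (s (v/q)) else 1) * |s (v/q)| ^ ((q:ℝ)⁻¹)

lemma xvec_head (q : ℕ) (s : ℕ → ℝ) (i : ℕ) (hq : 0 < q) :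
    xvec q s (q*i) = sgn (s i) * |s i| ^ ((q:ℝ)⁻¹) := by
  have h : q*i/q = i := by
    rw [Nat.mul_div_cancel_left _ hq]
  rw [xvec, h, if_pos rfl]

lemma xvec_nonhead {q : ℕ} {s : ℕ → ℝ} {i v : ℕ} (hq : 0 < q) (hv : v ∈ grp q i)
    (hne : v ≠ q*i) : xvec q s v = |s i| ^ ((q:ℝ)⁻¹) := by
  have h := mem_grp_div hq hv
  rw [xvec, h, if_neg hne]
  ring

lemma abs_rpow_pow (q : ℕ) (hq : 0 < q) (r : ℝ) : (|r| ^ ((q:ℝ)⁻¹)) ^ q = |r| :=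
  Real.rpow_inv_natCast_pow (abs_nonneg r) (by omega)

lemma prod_const_xvec (q : ℕ) (hq : 0 < q) (s : ℕ → ℝ) (i : ℕ) {S : Finset ℕ}
    (hS : S ⊆ (grp q i).erase (q*i)) :
    ∏ w ∈ S, xvec q s w = (|s i| ^ ((q:ℝ)⁻¹)) ^ S.card := by
  rw [Finset.prod_congr rfl (fun w hw => ?_), Finset.prod_const]
  have hw' := hS hw
  rw [Finset.mem_erase] at hw'
  exact xvec_nonhead hq hw'.2 hw'.1

lemma erase_grp_head (q i : ℕ) : (grp q i).erase (q*i) = Finset.Ico (q*i+1) (q*i+q) := by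
  ext w
  simp only [grp, Finset.mem_erase, Finset.mem_Ico]
  omega

lemma card_erase_grp_head (q i : ℕ) (hq : 0 < q) : ((grp q i).erase (q*i)).card = q - 1 := by
  rw [Finset.card_erase_of_mem (self_mem_grp hq), grp_card]

/-- P1: the product over a group equals the graph value -/
lemma prod_grp_xvec (q : ℕ) (hq2 : 2 ≤ q) (s : ℕ → ℝ) (i : ℕ) :
    ∏ w ∈ grp q i, xvec q s w = s i := by
  have hq : 0 < q := by omega
  rw [← Finset.mul_prod_erase _ _ (self_mem_grp hq (i := i)),
    prod_const_xvec q hq s i (Finset.Subset.refl _), card_erase_grp_head q i hq,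
    xvec_head q s i hq, mul_assoc, ← pow_succ']
  have hq1 : q - 1 + 1 = q := by omega
  rw [hq1, abs_rpow_pow q hq, sgn_mul_abs]

/-- P2: the (2q-1)-th power identity at a vertex -/
lemma pow_xvec (q : ℕ) (hq2 : 2 ≤ q) (s : ℕ → ℝ) {i v : ℕ} (hv : v ∈ grp q i) :
    xvec q s v ^ (2*q - 1) = s i * ∏ w ∈ (grp q i).erase v, xvec q s w := by
  have hq : 0 < q := by omega
  have hApow : (|s i| ^ ((q:ℝ)⁻¹)) ^ q = |s i| := abs_rpow_pow q hq (s i)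
  by_cases hs : s i = 0
  · have hA0 : |s i| ^ ((q:ℝ)⁻¹) = (0:ℝ) := by
      rw [hs, abs_zero, Real.zero_rpow (by simp; omega)]
    have hx0 : xvec q s v = 0 := by
      by_cases hne : v = q*i
      · rw [hne, xvec_head q s i hq, hA0, mul_zero]
      · rw [xvec_nonhead hq hv hne, hA0]
    rw [hx0, hs, zero_pow (by omega), zero_mul]
  · by_cases hne : v = q*i
    · -- head vertex
      subst hne
      rw [prod_const_xvec q hq s i (Finset.Subset.refl _), card_erase_grp_head q i hq,
        xvec_head q s i hq, mul_pow]
      have hodd : sgn (s i) ^ (2*q-1) = sgn (s i) := by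
        have h2 : 2*q-1 = 2*(q-1)+1 := by omega
        rw [h2, pow_succ, pow_mul, sgn_sq hs, one_pow, one_mul]
      rw [hodd]
      obtain ⟨a, ha, hAq⟩ : ∃ a : ℝ, a = |s i| ^ ((q:ℝ)⁻¹) ∧ a ^ q = |s i| :=
        ⟨_, rfl, abs_rpow_pow q hq (s i)⟩
      rw [← ha, show 2*q-1 = q + (q-1) from by omega, pow_add, ← mul_assoc, hAq,
        sgn_mul_abs]
    · -- non-head vertex
      have hmem : q*i ∈ (grp q i).erase v :=
        Finset.mem_erase.mpr ⟨fun h => hne h.symm, self_mem_grp hq⟩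
      rw [← Finset.mul_prod_erase _ _ hmem]
      have hsub : ((grp q i).erase v).erase (q*i) ⊆ (grp q i).erase (q*i) := by
        intro w hw
        rw [Finset.mem_erase] at hw ⊢
        exact ⟨hw.1, Finset.erase_subset _ _ hw.2⟩
      rw [prod_const_xvec q hq s i hsub, Finset.card_erase_of_mem hmem,
        Finset.card_erase_of_mem hv, grp_card, xvec_nonhead hq hv hne,
        xvec_head q s i hq]
      obtain ⟨a, ha, hAq⟩ : ∃ a : ℝ, a = |s i| ^ ((q:ℝ)⁻¹) ∧ a ^ q = |s i| :=
        ⟨_, rfl, abs_rpow_pow q hq (s i)⟩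
      rw [← ha, show 2*q-1 = q + (q-1) from by omega, pow_add, hAq,
        mul_assoc (sgn (s i)) a (a ^ (q-1-1)),
        show a * a^(q-1-1) = a^(q-1) from by rw [← pow_succ']; congr 1; omega,
        ← mul_assoc, mul_comm (s i) (sgn (s i)), sgn_mul_self hs]

/-- membership facts about verts -/
lemma vert_div_lt {q N v : ℕ} (hq : 0 < q) (hv : v ∈ Finset.range (q*(2*N+5))) :
    v / q < 2*N+5 := by
  rw [Finset.mem_range] at hv
  exact Nat.div_lt_of_lt_mul (by rw [Nat.mul_comm] at hv ⊢; exact hv)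

lemma vert_mem_grp {q v : ℕ} (hq : 0 < q) : v ∈ grp q (v / q) := by
  have h1 := Nat.div_add_mod v q
  have h2 := Nat.mod_lt v hq
  simp only [grp, Finset.mem_Ico]
  omega

/-- L6: a graph eigenpair yields a hypergraph H-eigenpair. -/
lemma transfer (q N : ℕ) (hq2 : 2 ≤ q) (hq : 0 < q) (lam : ℝ) (s : ℕ → ℝ)
    (heig : ∀ i, i < 2*N+5 → lam * s i = Bsum N s i)
    (hs : ∃ i, i < 2*N+5 ∧ s i ≠ 0) :
    (HG q N hq).IsAdjHEig lam := by
  refine ⟨xvec q s, ?_, ?_⟩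
  · obtain ⟨i, hi, hsi⟩ := hs
    refine ⟨q*i+1, ?_, ?_⟩
    · rw [HG_verts]
      exact grp_subset_range hi (by simp [grp, Finset.mem_Ico]; omega)
    · have hmem : q*i+1 ∈ grp q i := by simp [grp, Finset.mem_Ico]; omega
      rw [xvec_nonhead hq hmem (by omega)]
      have : (0:ℝ) < |s i| ^ ((q:ℝ)⁻¹) :=
        Real.rpow_pos_of_pos (abs_pos.mpr hsi) _
      exact ne_of_gt this
  · intro v hv
    rw [HG_verts] at hv
    have hi : v / q < 2*N+5 := vert_div_lt hq hv
    have hvg : v ∈ grp q (v / q) := vert_mem_grp hq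
    rw [hyper_sum q N hq (xvec q s) hvg]
    have hB : Bsum N (fun j => ∏ w ∈ grp q j, xvec q s w) (v/q) = Bsum N s (v/q) := by
      unfold Bsum
      refine Finset.sum_congr rfl (fun p hp => ?_)
      dsimp only
      rw [prod_grp_xvec q hq2 s p.1, prod_grp_xvec q hq2 s p.2]
    rw [hB, show 2*q-1 = 2*q-1 from rfl, pow_xvec q hq2 s hvg, ← heig _ hi]
    ring

/-- L7: a hypergraph H-eigenpair yields a "graph quadratic eigenpair". -/
lemma reduce (q N : ℕ) (hq2 : 2 ≤ q) (hq : 0 < q) (mu : ℝ) (x : ℕ → ℝ)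
    (heq : ∀ v ∈ (HG q N hq).verts, mu * x v ^ (2*q - 1)
      = ∑ e ∈ (HG q N hq).edges.filter (fun e => v ∈ e), ∏ w ∈ e.erase v, x w)
    (hnz : ∃ v ∈ (HG q N hq).verts, x v ≠ 0) :
    (∀ i, i < 2*N+5 →
      mu * (∏ w ∈ grp q i, x w)^2
        = (∏ w ∈ grp q i, x w) * Bsum N (fun j => ∏ w ∈ grp q j, x w) i) ∧
    (mu ≠ 0 → ∃ i, i < 2*N+5 ∧ (∏ w ∈ grp q i, x w) ≠ 0) := by
  set s : ℕ → ℝ := fun j => ∏ w ∈ grp q j, x w with hsdef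
  -- the multiplied equation at every vertex of a group
  have key : ∀ i, i < 2*N+5 → ∀ v ∈ grp q i, mu * x v ^ (2*q) = s i * Bsum N s i := by
    intro i hi v hvg
    have hv : v ∈ (HG q N hq).verts := by
      rw [HG_verts]; exact grp_subset_range hi hvg
    have h1 := heq v hv
    rw [hyper_sum q N hq x hvg] at h1
    have h2 : x v * (mu * x v ^ (2*q - 1)) = x v * ((∏ w ∈ (grp q i).erase v, x w) * Bsum N s i) := by
      rw [h1]
    have hsplit : x v ^ (2*q) = x v * x v ^ (2*q-1) := by
      rw [← pow_succ']
      congr 1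
      omega
    calc mu * x v ^ (2*q) = x v * (mu * x v ^ (2*q-1)) := by rw [hsplit]; ring
      _ = x v * ((∏ w ∈ (grp q i).erase v, x w) * Bsum N s i) := h2
      _ = (x v * ∏ w ∈ (grp q i).erase v, x w) * Bsum N s i := by ring
      _ = s i * Bsum N s i := by rw [Finset.mul_prod_erase _ _ hvg]
  -- squares are constant across a group when mu ≠ 0
  have sq_const : ∀ i, i < 2*N+5 → mu ≠ 0 → ∀ v ∈ grp q i, ∀ w ∈ grp q i,
      x v ^ 2 = x w ^ 2 := by
    intro i hi hmu v hv w hw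
    have h1 := key i hi v hv
    have h2 := key i hi w hw
    have h3 : x v ^ (2*q) = x w ^ (2*q) := by
      have := h1.trans h2.symm
      exact mul_left_cancel₀ hmu this
    have h4 : (x v ^ 2) ^ q = (x w ^ 2) ^ q := by
      rw [← pow_mul, ← pow_mul]
      exact h3
    exact (pow_left_strictMonoOn₀ (n := q) (by omega)).injOn
      (Set.mem_setOf.mpr (sq_nonneg _)) (Set.mem_setOf.mpr (sq_nonneg _)) h4
  have sq_prod : ∀ i, i < 2*N+5 → mu ≠ 0 → ∀ v ∈ grp q i, (s i)^2 = (x v ^ 2)^q := by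
    intro i hi hmu v hv
    rw [hsdef]
    simp only
    rw [← Finset.prod_pow]
    rw [Finset.prod_congr rfl (fun w hw => sq_const i hi hmu w hw v hv), Finset.prod_const,
      grp_card]
  constructor
  · intro i hi
    by_cases hmu : mu = 0
    · rw [hmu, zero_mul]
      have h0 := key i hi (q*i) (self_mem_grp hq)
      rw [hmu, zero_mul] at h0
      exact h0
    · have h1 := key i hi (q*i) (self_mem_grp hq)
      have h2 := sq_prod i hi hmu (q*i) (self_mem_grp hq)
      rw [h2, ← pow_mul]
      exact h1
  · intro hmu
    obtain ⟨v, hv, hxv⟩ := hnz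
    rw [HG_verts] at hv
    have hi : v / q < 2*N+5 := vert_div_lt hq hv
    refine ⟨v/q, hi, ?_⟩
    have h2 := sq_prod (v/q) hi hmu v (vert_mem_grp hq)
    intro hcon
    have hcon' : s (v/q) = 0 := hcon
    rw [hcon'] at h2
    have : x v ^ 2 > 0 := by positivity
    have : ((x v)^2)^q > 0 := by positivity
    rw [← h2] at this
    simp at this




/-- extend a `Fin`-vector to `ℕ` by zero -/
def ext (N : ℕ) (z : EuclideanSpace ℝ (Fin (2*N+5))) (v : ℕ) : ℝ :=
  if h : v < 2*N+5 then z ⟨v, h⟩ else 0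

lemma ext_lt {N : ℕ} (z : EuclideanSpace ℝ (Fin (2*N+5))) {v : ℕ} (h : v < 2*N+5) :
    ext N z v = z ⟨v, h⟩ := dif_pos h

lemma ext_fin {N : ℕ} (z : EuclideanSpace ℝ (Fin (2*N+5))) (i : Fin (2*N+5)) :
    ext N z ↑i = z i := by rw [ext_lt z i.isLt]

lemma Bsum_congr {N : ℕ} {f g : ℕ → ℝ} (h : ∀ j, j < 2*N+5 → f j = g j) (i : ℕ) :
    Bsum N f i = Bsum N g i := by
  unfold Bsum
  refine Finset.sum_congr rfl (fun p hp => ?_)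
  have hlt := GE_lt hp
  rw [h p.1 (by omega), h p.2 (by omega)]

/-- the adjacency operator -/
noncomputable def Top (N : ℕ) :
    EuclideanSpace ℝ (Fin (2*N+5)) →ₗ[ℝ] EuclideanSpace ℝ (Fin (2*N+5)) where
  toFun z := WithLp.toLp 2 (fun i => Bsum N (ext N z) ↑i)
  map_add' z w := by
    ext i
    show Bsum N (ext N (z + w)) ↑i = Bsum N (ext N z) ↑i + Bsum N (ext N w) ↑i
    unfold Bsum
    rw [← Finset.sum_add_distrib]
    refine Finset.sum_congr rfl (fun p hp => ?_)
    have hext : ∀ v, ext N (z+w) v = ext N z v + ext N w v := by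
      intro v; unfold ext; split
      · simp [PiLp.add_apply]
      · ring
    rw [hext, hext]
    split_ifs <;> ring
  map_smul' c z := by
    ext i
    show Bsum N (ext N (c • z)) ↑i = c * Bsum N (ext N z) ↑i
    unfold Bsum
    rw [Finset.mul_sum]
    refine Finset.sum_congr rfl (fun p hp => ?_)
    have hext : ∀ v, ext N (c • z) v = c * ext N z v := by
      intro v; unfold ext; split
      · simp [PiLp.smul_apply]
      · ring
    rw [hext, hext]
    split_ifs <;> ring

lemma Top_apply {N : ℕ} (z : EuclideanSpace ℝ (Fin (2*N+5))) (i : Fin (2*N+5)) :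
    Top N z i = Bsum N (ext N z) ↑i := rfl

lemma inner_sum {N : ℕ} (z w : EuclideanSpace ℝ (Fin (2*N+5))) :
    (inner ℝ z w : ℝ) = ∑ i : Fin (2*N+5), z i * w i := by
  simp [PiLp.inner_apply, RCLike.inner_apply, conj_trivial]
  exact Finset.sum_congr rfl (fun i _ => mul_comm _ _)

lemma sum_fin_ite {m a : ℕ} (ha : a < m) (c : ℝ) (g : Fin m → ℝ) :
    ∑ i : Fin m, (if a = ↑i then c else 0) * g i = c * g ⟨a, ha⟩ := by
  rw [Finset.sum_eq_single (⟨a, ha⟩ : Fin m)]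
  · rw [if_pos rfl]
  · intro b _ hb
    rw [if_neg (fun hc => hb (by ext; simp [← hc])), zero_mul]
  · intro h; exact absurd (Finset.mem_univ _) h

/-- the quadratic form of the adjacency operator -/
lemma quad_form {N : ℕ} (z w : EuclideanSpace ℝ (Fin (2*N+5))) :
    (inner ℝ (Top N z) w : ℝ)
      = ∑ p ∈ GE N, (ext N z p.1 * ext N w p.2 + ext N z p.2 * ext N w p.1) := by
  rw [inner_sum]
  have h1 : ∀ i : Fin (2*N+5), Top N z i * w i
      = ∑ p ∈ GE N, (((if p.1 = ↑i then ext N z p.2 else 0) * w i)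
          + ((if p.2 = ↑i then ext N z p.1 else 0) * w i)) := by
    intro i
    rw [Top_apply, Bsum, Finset.sum_mul]
    refine Finset.sum_congr rfl (fun p hp => by ring)
  rw [Finset.sum_congr rfl (fun i _ => h1 i), Finset.sum_comm]
  refine Finset.sum_congr rfl (fun p hp => ?_)
  have hlt := GE_lt hp
  rw [Finset.sum_add_distrib, sum_fin_ite (by omega : p.1 < 2*N+5) _ w,
    sum_fin_ite (by omega : p.2 < 2*N+5) _ w]
  rw [ext_lt w (by omega : p.1 < 2*N+5), ext_lt w (by omega : p.2 < 2*N+5)]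
  ring

lemma Top_symm (N : ℕ) : (Top N).IsSymmetric := by
  intro z w
  rw [quad_form]
  rw [real_inner_comm, quad_form]
  refine Finset.sum_congr rfl (fun p hp => by ring)

lemma norm_sq_sum {N : ℕ} (z : EuclideanSpace ℝ (Fin (2*N+5))) :
    ‖z‖^2 = ∑ i : Fin (2*N+5), (z i)^2 := by
  rw [← real_inner_self_eq_norm_sq, inner_sum]
  exact Finset.sum_congr rfl (fun i _ => (sq (z i)).symm)



lemma th_sub_ga_inv : th - ga⁻¹ = ga := by rw [ga_inv]; ring

/-- splitting a sum over the edges -/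
lemma GE_sum_split (N : ℕ) (f : ℕ × ℕ → ℝ) :
    ∑ p ∈ GE N, f p = (∑ i ∈ Finset.range (2*N), f (i, i+1)) + (f (N, 2*N+1)
      + (f (2*N+2, 2*N+3) + (f (2*N+3, 2*N+4) + f (2*N+2, 2*N+4)))) := by
  rw [GE_def]
  have hdisj : Disjoint ((Finset.range (2*N)).image fun i => (i, i+1))
      ({(N, 2*N+1), (2*N+2, 2*N+3), (2*N+3, 2*N+4), (2*N+2, 2*N+4)} : Finset (ℕ × ℕ)) := by
    rw [Finset.disjoint_left]
    intro p hp hp'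
    simp only [Finset.mem_image, Finset.mem_range] at hp
    obtain ⟨i, hi, rfl⟩ := hp
    simp only [Finset.mem_insert, Finset.mem_singleton, Prod.mk.injEq] at hp'
    omega
  rw [Finset.sum_union hdisj,
    Finset.sum_image (fun a _ b _ h => by simpa using congrArg Prod.fst h)]
  congr 1
  rw [Finset.sum_insert (by
      simp only [Finset.mem_insert, Finset.mem_singleton, Prod.mk.injEq]
      push_neg
      omega),
    Finset.sum_insert (by
      simp only [Finset.mem_insert, Finset.mem_singleton, Prod.mk.injEq]
      push_neg
      omega),
    Finset.sum_insert (by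
      simp only [Finset.mem_singleton, Prod.mk.injEq]
      push_neg
      omega),
    Finset.sum_singleton]

/-- splitting the diagonal sum -/
lemma diag_split (N : ℕ) (g : ℕ → ℝ) :
    ∑ v ∈ Finset.range (2*N+5), g v
      = ((∑ v ∈ Finset.range N, g v) + g N + ∑ t ∈ Finset.range N, g (N+1+t))
        + g (2*N+1) + g (2*N+2) + g (2*N+3) + g (2*N+4) := by
  rw [show 2*N+5 = (2*N+4)+1 from rfl, Finset.sum_range_succ,
    show 2*N+4 = (2*N+3)+1 from rfl, Finset.sum_range_succ,
    show 2*N+3 = (2*N+2)+1 from rfl, Finset.sum_range_succ,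
    show 2*N+2 = (2*N+1)+1 from rfl, Finset.sum_range_succ]
  congr 4
  rw [Finset.range_eq_Ico,
    ← Finset.sum_Ico_consecutive g (Nat.zero_le (N+1)) (by omega : N+1 ≤ 2*N+1),
    ← Finset.range_eq_Ico, Finset.sum_range_succ, Finset.sum_Ico_eq_sum_range,
    show 2*N+1-(N+1) = N from by omega]

/-- splitting the path sum -/
lemma path_split (N : ℕ) (g : ℕ → ℝ) :
    ∑ i ∈ Finset.range (2*N), g i
      = (∑ i ∈ Finset.range N, g i) + ∑ t ∈ Finset.range N, g (N+t) := by
  rw [Finset.range_eq_Ico,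
    ← Finset.sum_Ico_consecutive g (Nat.zero_le N) (by omega : N ≤ 2*N),
    ← Finset.range_eq_Ico, Finset.sum_Ico_eq_sum_range,
    show 2*N-N = N from by omega]

/-- the basic SOS step for one arm of the path -/
lemma arm_sos (L : ℕ) (w : ℕ → ℝ) :
    0 ≤ (∑ i ∈ Finset.range L, (2 * w i * w (i+1) + th * (w i)^2)) + ga⁻¹ * (w L)^2 := by
  induction L with
  | zero =>
    simp only [Finset.range_zero, Finset.sum_empty, zero_add]
    exact mul_nonneg (le_of_lt ga_inv_pos) (sq_nonneg _)
  | succ L ih =>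
    rw [Finset.sum_range_succ]
    have hkey : 0 ≤ ga * (w L)^2 + 2 * w L * w (L+1) + ga⁻¹ * (w (L+1))^2 := by
      have h1 : ga * ga⁻¹ = 1 := mul_inv_cancel₀ (ne_of_gt ga_pos)
      have h2 := ga_pos
      nlinarith [sq_nonneg (ga * w L + w (L+1)), sq_nonneg (w (L+1))]
    have harm : th - ga⁻¹ = ga := th_sub_ga_inv
    nlinarith [ih]

lemma sum_split_two (N : ℕ) (u v : ℕ → ℝ) :
    ∑ i ∈ Finset.range N, (u i + v i)
      = (∑ i ∈ Finset.range N, u i) + ∑ i ∈ Finset.range N, v i :=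
  Finset.sum_add_distrib

/-- the full SOS certificate: the quadratic form is bounded below by -θ‖·‖² -/
lemma sos_key (N : ℕ) (X : ℕ → ℝ) :
    0 ≤ (∑ p ∈ GE N, (X p.1 * X p.2 + X p.2 * X p.1))
      + th * ∑ v ∈ Finset.range (2*N+5), (X v)^2 := by
  rw [GE_sum_split, diag_split]
  -- left arm
  have hL := arm_sos N X
  rw [sum_split_two N (fun i => 2 * X i * X (i+1)) (fun i => th * (X i)^2)] at hL
  -- right arm
  have hR := arm_sos N (fun d => X (2*N - d))
  rw [sum_split_two N (fun i => 2 * X (2*N-i) * X (2*N-(i+1))) (fun i => th * (X (2*N-i))^2)] at hR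
  have hcross : ∑ i ∈ Finset.range N, 2 * X (2*N - i) * X (2*N - (i+1))
      = ∑ t ∈ Finset.range N, 2 * X (N+t) * X (N+t+1) := by
    rw [← Finset.sum_range_reflect]
    refine Finset.sum_congr rfl (fun t ht => ?_)
    rw [Finset.mem_range] at ht
    have e1 : 2*N - (N-1-t) = N+1+t := by omega
    have e2 : 2*N - (N-1-t+1) = N+t := by omega
    rw [e1, e2]
    ring
  have hdiag2 : ∑ i ∈ Finset.range N, th * (X (2*N - i))^2
      = ∑ t ∈ Finset.range N, th * (X (N+1+t))^2 := by
    rw [← Finset.sum_range_reflect]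
    refine Finset.sum_congr rfl (fun t ht => ?_)
    rw [Finset.mem_range] at ht
    have e1 : 2*N - (N-1-t) = N+1+t := by omega
    rw [e1]
  have hRN : X (2*N - N) = X N := by congr 1; omega
  rw [hcross, hdiag2, hRN] at hR
  -- path cross terms
  have hpath : ∑ i ∈ Finset.range (2*N), (X i * X (i+1) + X (i+1) * X i)
      = (∑ i ∈ Finset.range N, 2 * X i * X (i+1))
        + ∑ t ∈ Finset.range N, 2 * X (N+t) * X (N+t+1) := by
    rw [path_split N (fun i => X i * X (i+1) + X (i+1) * X i)]
    congr 1
    · exact Finset.sum_congr rfl (fun i _ => by ring)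
    · exact Finset.sum_congr rfl (fun t _ => by ring)
  -- diagonal pieces
  have hdiagL : th * ∑ v ∈ Finset.range N, (X v)^2 = ∑ i ∈ Finset.range N, th * (X i)^2 :=
    Finset.mul_sum _ _ _
  have hdiagR : th * ∑ t ∈ Finset.range N, (X (N+1+t))^2
      = ∑ t ∈ Finset.range N, th * (X (N+1+t))^2 := Finset.mul_sum _ _ _
  -- pendant edge + center
  have hpend : 0 ≤ (th - 2*ga⁻¹) * (X N)^2 + 2 * X N * X (2*N+1) + th * (X (2*N+1))^2 := by
    rw [th_sub_two_ga_inv]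
    have h1 : th⁻¹ * th = 1 := inv_mul_cancel₀ (ne_of_gt th_pos)
    have h2 := th_pos
    have h3 : 0 < th⁻¹ := inv_pos.mpr th_pos
    nlinarith [sq_nonneg (X N + th * X (2*N+1))]
  -- triangle
  have htri : 0 ≤ (X (2*N+2) * X (2*N+3) + X (2*N+3) * X (2*N+2))
      + (X (2*N+3) * X (2*N+4) + X (2*N+4) * X (2*N+3))
      + (X (2*N+2) * X (2*N+4) + X (2*N+4) * X (2*N+2))
      + th * ((X (2*N+2))^2 + (X (2*N+3))^2 + (X (2*N+4))^2) := by
    have h2 := th_gt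
    nlinarith [sq_nonneg (X (2*N+2) + X (2*N+3) + X (2*N+4)), sq_nonneg (X (2*N+2)),
      sq_nonneg (X (2*N+3)), sq_nonneg (X (2*N+4))]
  rw [hpath]
  linarith [hL, hR, hpend, htri, hdiagL, hdiagR]

noncomputable def lam (N : ℕ) : ℝ :=
  ⨅ x : {x : EuclideanSpace ℝ (Fin (2*N+5)) // x ≠ 0},
    (inner ℝ (Top N ↑x) (↑x : EuclideanSpace ℝ (Fin (2*N+5))) : ℝ) / ‖(x : EuclideanSpace ℝ (Fin (2*N+5)))‖ ^ 2

instance euclid_nontrivial (N : ℕ) : Nontrivial (EuclideanSpace ℝ (Fin (2*N+5))) := by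
  refine ⟨EuclideanSpace.single ⟨0, by omega⟩ (1:ℝ), 0, ?_⟩
  intro h
  have := congrFun (congrArg (fun (f : EuclideanSpace ℝ (Fin (2*N+5))) => (f : Fin (2*N+5) → ℝ))
    h) ⟨0, by omega⟩
  simp [EuclideanSpace.single_apply] at this

lemma rayleigh_ge (N : ℕ) (z : EuclideanSpace ℝ (Fin (2*N+5))) (hz : z ≠ 0) :
    -th ≤ (inner ℝ (Top N z) z : ℝ) / ‖z‖ ^ 2 := by
  have hq : (inner ℝ (Top N z) z : ℝ)
      = ∑ p ∈ GE N, (ext N z p.1 * ext N z p.2 + ext N z p.2 * ext N z p.1) := quad_form z z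
  have hn : ‖z‖^2 = ∑ v ∈ Finset.range (2*N+5), (ext N z v)^2 := by
    rw [norm_sq_sum, ← Fin.sum_univ_eq_sum_range (fun v => (ext N z v)^2)]
    exact Finset.sum_congr rfl (fun i _ => by rw [ext_fin])
  have hpos : (0:ℝ) < ‖z‖^2 := pow_pos (norm_pos_iff.mpr hz) 2
  rw [le_div_iff₀ hpos]
  have := sos_key N (ext N z)
  rw [← hq, ← hn] at this
  linarith

lemma bdd_below_rayleigh (N : ℕ) : BddBelow (Set.range (fun x : {x : EuclideanSpace ℝ (Fin (2*N+5)) // x ≠ 0} =>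
    (inner ℝ (Top N ↑x) (↑x : EuclideanSpace ℝ (Fin (2*N+5))) : ℝ) / ‖(x : EuclideanSpace ℝ (Fin (2*N+5)))‖ ^ 2)) := by
  refine ⟨-th, ?_⟩
  rintro y ⟨x, rfl⟩
  exact rayleigh_ge N ↑x x.2

lemma lam_ge (N : ℕ) : -th ≤ lam N := by
  haveI : Nontrivial (EuclideanSpace ℝ (Fin (2*N+5))) := euclid_nontrivial N
  haveI : Nonempty {x : EuclideanSpace ℝ (Fin (2*N+5)) // x ≠ 0} :=
    nonempty_subtype.mpr (exists_ne 0)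
  exact le_ciInf (fun x => rayleigh_ge N ↑x x.2)

lemma lam_le (N : ℕ) (z : EuclideanSpace ℝ (Fin (2*N+5))) (hz : z ≠ 0) :
    lam N ≤ (inner ℝ (Top N z) z : ℝ) / ‖z‖ ^ 2 :=
  ciInf_le (bdd_below_rayleigh N) ⟨z, hz⟩

/-- the infimum is attained: there is an eigenvector -/
lemma lam_eig (N : ℕ) : ∃ z : EuclideanSpace ℝ (Fin (2*N+5)), z ≠ 0 ∧
    ∀ i : Fin (2*N+5), Bsum N (ext N z) ↑i = lam N * z i := by
  have h := (Top_symm N).hasEigenvalue_iInf_of_finiteDimensional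
  have heq : (⨅ x : {x : EuclideanSpace ℝ (Fin (2*N+5)) // x ≠ 0},
      RCLike.re (inner ℝ (Top N ↑x) (↑x : EuclideanSpace ℝ (Fin (2*N+5))) : ℝ)
        / ‖(x : EuclideanSpace ℝ (Fin (2*N+5)))‖ ^ 2) = lam N := by
    unfold lam
    congr 1
  rw [heq] at h
  obtain ⟨z, hz⟩ := h.exists_hasEigenvector
  refine ⟨z, hz.right, fun i => ?_⟩
  have happ := hz.apply_eq_smul
  have : Top N z i = (lam N • z) i := by rw [happ]; rfl
  rw [Top_apply] at this
  rw [this]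
  simp

/-- minimality of `lam` against quadratic eigen-data coming from the hypergraph -/
lemma lam_min (N : ℕ) (mu : ℝ) (s : ℕ → ℝ)
    (h1 : ∀ i, i < 2*N+5 → mu * (s i)^2 = s i * Bsum N s i)
    (h2 : ∃ i, i < 2*N+5 ∧ s i ≠ 0) : lam N ≤ mu := by
  set z : EuclideanSpace ℝ (Fin (2*N+5)) := WithLp.toLp 2 (fun i => s ↑i) with hzdef
  have hext : ∀ v, v < 2*N+5 → ext N z v = s v := by
    intro v hv
    rw [ext_lt z hv]
  have hz : z ≠ 0 := by
    obtain ⟨i0, hi0, hs0⟩ := h2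
    intro h0
    have : z ⟨i0, hi0⟩ = 0 := by rw [h0]; rfl
    exact hs0 this
  have hinner : (inner ℝ (Top N z) z : ℝ) = mu * ‖z‖^2 := by
    rw [inner_sum, norm_sq_sum, Finset.mul_sum]
    refine Finset.sum_congr rfl (fun i _ => ?_)
    rw [Top_apply, Bsum_congr (fun j hj => hext j hj) ↑i]
    have hzi : z i = s ↑i := rfl
    rw [hzi, mul_comm (Bsum N s ↑i) (s ↑i), ← h1 ↑i i.isLt]
  have hle := lam_le N z hz
  rw [hinner] at hle
  have hpos : (0:ℝ) < ‖z‖^2 := pow_pos (norm_pos_iff.mpr hz) 2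
  rwa [mul_div_assoc, div_self (ne_of_gt hpos), mul_one] at hle

/-! ### test vector giving the upper bound -/

/-- distance to the center of the path -/
def dd (N v : ℕ) : ℕ := if v ≤ N then N - v else v - N

/-- the test vector -/
noncomputable def tv (N : ℕ) (v : ℕ) : ℝ :=
  if v ≤ 2*N then (-ga⁻¹) ^ (dd N v) else if v = 2*N+1 then -th⁻¹ else 0

lemma tv_center (N : ℕ) : tv N N = 1 := by
  rw [tv, if_pos (by omega), dd, if_pos (le_refl N), Nat.sub_self, pow_zero]

lemma tv_pend (N : ℕ) : tv N (2*N+1) = -th⁻¹ := by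
  rw [tv, if_neg (by omega), if_pos rfl]

lemma tv_left {N i : ℕ} (hi : i ≤ N) : tv N i = (-ga⁻¹) ^ (N - i) := by
  rw [tv, if_pos (by omega), dd, if_pos hi]

lemma tv_right {N t : ℕ} (ht : t ≤ N) : tv N (N+t) = (-ga⁻¹) ^ t := by
  rw [tv, if_pos (by omega), dd]
  split
  · congr 1; omega
  · congr 1; omega

lemma tv_tri {N v : ℕ} (h1 : 2*N+1 < v) : tv N v = 0 := by
  rw [tv, if_neg (by omega), if_neg (by omega)]

/-- geometric sum appearing in the computation -/
noncomputable def GN (N : ℕ) : ℝ := ∑ t ∈ Finset.range N, (ga⁻¹^2) ^ t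

lemma neg_pow_key (t : ℕ) : (-ga⁻¹)^(t+1) * (-ga⁻¹)^t = -(ga⁻¹ * (ga⁻¹^2)^t) := by
  rw [← pow_add, show t+1+t = 2*t+1 from by omega, pow_succ, pow_mul, neg_sq]
  ring

lemma neg_pow_key2 (t : ℕ) : ((-ga⁻¹)^(t+1))^2 = ga⁻¹^2 * (ga⁻¹^2)^t := by
  rw [← pow_mul, show (t+1)*2 = 2*t+2 from by omega, pow_add, pow_mul, neg_sq]
  ring

lemma tv_QF (N : ℕ) :
    ∑ p ∈ GE N, (tv N p.1 * tv N p.2 + tv N p.2 * tv N p.1)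
      = 4*(-ga⁻¹)*GN N - 2*th⁻¹ := by
  rw [GE_sum_split]
  have htri1 : tv N (2*N+2) = 0 := tv_tri (by omega)
  have htri2 : tv N (2*N+3) = 0 := tv_tri (by omega)
  have htri3 : tv N (2*N+4) = 0 := tv_tri (by omega)
  have hpath : ∑ i ∈ Finset.range (2*N), (tv N i * tv N (i+1) + tv N (i+1) * tv N i)
      = 4*(-ga⁻¹)*GN N := by
    rw [path_split N (fun i => tv N i * tv N (i+1) + tv N (i+1) * tv N i)]
    have hleft : ∑ i ∈ Finset.range N, (tv N i * tv N (i+1) + tv N (i+1) * tv N i)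
        = 2*(-ga⁻¹)*GN N := by
      rw [← Finset.sum_range_reflect]
      rw [GN, Finset.mul_sum]
      refine Finset.sum_congr rfl (fun t ht => ?_)
      rw [Finset.mem_range] at ht
      rw [tv_left (by omega : N-1-t ≤ N), tv_left (by omega : N-1-t+1 ≤ N),
        show N-(N-1-t) = t+1 from by omega, show N-(N-1-t+1) = t from by omega]
      linear_combination (2:ℝ) * neg_pow_key t
    have hright : ∑ t ∈ Finset.range N, (tv N (N+t) * tv N (N+t+1) + tv N (N+t+1) * tv N (N+t))
        = 2*(-ga⁻¹)*GN N := by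
      rw [GN, Finset.mul_sum]
      refine Finset.sum_congr rfl (fun t ht => ?_)
      rw [Finset.mem_range] at ht
      rw [show N+t+1 = N+(t+1) from by omega, tv_right (by omega : t ≤ N),
        tv_right (by omega : t+1 ≤ N)]
      linear_combination (2:ℝ) * neg_pow_key t
    rw [hleft, hright]
    ring
  rw [hpath, tv_center, tv_pend, htri1, htri2, htri3]
  ring

lemma tv_NF (N : ℕ) :
    ∑ v ∈ Finset.range (2*N+5), (tv N v)^2 = 2*ga⁻¹^2*GN N + 1 + th⁻¹^2 := by
  rw [diag_split N (fun v => (tv N v)^2)]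
  have htri1 : tv N (2*N+2) = 0 := tv_tri (by omega)
  have htri2 : tv N (2*N+3) = 0 := tv_tri (by omega)
  have htri3 : tv N (2*N+4) = 0 := tv_tri (by omega)
  have hleft : ∑ v ∈ Finset.range N, (tv N v)^2 = ga⁻¹^2 * GN N := by
    rw [← Finset.sum_range_reflect, GN, Finset.mul_sum]
    refine Finset.sum_congr rfl (fun t ht => ?_)
    rw [Finset.mem_range] at ht
    rw [tv_left (by omega : N-1-t ≤ N), show N-(N-1-t) = t+1 from by omega]
    exact neg_pow_key2 t
  have hright : ∑ t ∈ Finset.range N, (tv N (N+1+t))^2 = ga⁻¹^2 * GN N := by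
    rw [GN, Finset.mul_sum]
    refine Finset.sum_congr rfl (fun t ht => ?_)
    rw [Finset.mem_range] at ht
    rw [show N+1+t = N+(t+1) from by omega, tv_right (by omega : t+1 ≤ N)]
    exact neg_pow_key2 t
  rw [hleft, hright, tv_center, tv_pend, htri1, htri2, htri3]
  ring

lemma ga_inv_lt_one' : ga⁻¹ < 1 := by
  rw [inv_lt_one_iff₀]
  right
  exact ga_gt_one

lemma ga_inv_sq_lt_one : ga⁻¹^2 < 1 := by
  nlinarith [ga_inv_pos, ga_inv_lt_one']

lemma ga_inv_sq_ne_one : ga⁻¹^2 ≠ 1 := ne_of_lt ga_inv_sq_lt_one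

lemma tv_total (N : ℕ) :
    (∑ p ∈ GE N, (tv N p.1 * tv N p.2 + tv N p.2 * tv N p.1))
      + th * ∑ v ∈ Finset.range (2*N+5), (tv N v)^2
      = 2*ga⁻¹*(ga⁻¹^2)^N := by
  rw [tv_QF, tv_NF]
  have hgeom : GN N * (ga⁻¹^2 - 1) = (ga⁻¹^2)^N - 1 := by
    rw [GN]; exact geom_sum_mul _ _
  have hgi : ga⁻¹ = (th - th⁻¹)/2 := by rw [ga_inv]; unfold ga; ring
  have htne : th ≠ 0 := ne_of_gt th_pos
  have th4 := th4
  generalize hP : (ga⁻¹^2)^N = P at hgeom ⊢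
  generalize hG : GN N = G at hgeom ⊢
  rw [hgi] at hgeom ⊢
  field_simp at hgeom ⊢
  ring_nf at hgeom ⊢
  linear_combination (5/2 - 1/2*th^2) * hgeom
    + (-5/2*G + 2 - 2*P + 1/2*G*th^2) * th4


/-- the test vector as a Euclidean vector -/
noncomputable def tvz (N : ℕ) : EuclideanSpace ℝ (Fin (2*N+5)) := WithLp.toLp 2 (fun i => tv N ↑i)

lemma tvz_ne (N : ℕ) : tvz N ≠ 0 := by
  intro h
  have h1 : tvz N ⟨N, by omega⟩ = 0 := by rw [h]; rfl
  rw [show tvz N ⟨N, by omega⟩ = tv N N from rfl, tv_center] at h1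
  norm_num at h1

lemma lam_upper (N : ℕ) : lam N ≤ -th + 2*ga⁻¹*(ga⁻¹^2)^N := by
  have hz := tvz_ne N
  have hext : ∀ v, v < 2*N+5 → ext N (tvz N) v = tv N v := fun v hv => ext_lt _ hv
  have hQF : (inner ℝ (Top N (tvz N)) (tvz N) : ℝ)
      = ∑ p ∈ GE N, (tv N p.1 * tv N p.2 + tv N p.2 * tv N p.1) := by
    rw [quad_form]
    refine Finset.sum_congr rfl (fun p hp => ?_)
    have hlt := GE_lt hp
    rw [hext p.1 (by omega), hext p.2 (by omega)]
  have hNF : ‖tvz N‖^2 = ∑ v ∈ Finset.range (2*N+5), (tv N v)^2 := by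
    rw [norm_sq_sum, ← Fin.sum_univ_eq_sum_range (fun v => (tv N v)^2)]
    exact Finset.sum_congr rfl (fun i _ => by rw [show tvz N i = tv N ↑i from rfl])
  have hNF1 : (1:ℝ) ≤ ‖tvz N‖^2 := by
    rw [hNF]
    have hmem : N ∈ Finset.range (2*N+5) := by simp; omega
    calc (1:ℝ) = (tv N N)^2 := by rw [tv_center]; norm_num
      _ ≤ ∑ v ∈ Finset.range (2*N+5), (tv N v)^2 :=
          Finset.single_le_sum (f := fun v => (tv N v)^2) (fun v _ => sq_nonneg _) hmem
  have htot : (inner ℝ (Top N (tvz N)) (tvz N) : ℝ) + th * ‖tvz N‖^2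
      = 2*ga⁻¹*(ga⁻¹^2)^N := by
    rw [hQF, hNF]
    exact tv_total N
  have hD : (0:ℝ) ≤ 2*ga⁻¹*(ga⁻¹^2)^N :=
    mul_nonneg (mul_nonneg (by norm_num) (le_of_lt ga_inv_pos)) (pow_nonneg (sq_nonneg _) N)
  have hle := lam_le N (tvz N) hz
  have hpos : (0:ℝ) < ‖tvz N‖^2 := by linarith
  have : (inner ℝ (Top N (tvz N)) (tvz N) : ℝ) / ‖tvz N‖^2 ≤ -th + 2*ga⁻¹*(ga⁻¹^2)^N := by
    rw [div_le_iff₀ hpos]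
    nlinarith [htot, hNF1, hD]
  linarith

lemma lam_le_zero (N : ℕ) : lam N ≤ 0 := by
  set z : EuclideanSpace ℝ (Fin (2*N+5)) := EuclideanSpace.single ⟨0, by omega⟩ (1:ℝ) with hzdef
  have hz : z ≠ 0 := by
    intro h
    have h1 : z ⟨0, by omega⟩ = 0 := by rw [h]; rfl
    rw [hzdef, EuclideanSpace.single_apply, if_pos rfl] at h1
    norm_num at h1
  have hQF : (inner ℝ (Top N z) z : ℝ) = 0 := by
    rw [quad_form]
    rw [Finset.sum_congr rfl (fun p hp => ?_), Finset.sum_const, smul_zero]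
    have hlt := GE_lt hp
    have h1 : ext N z p.1 * ext N z p.2 = 0 := by
      rw [ext_lt z (by omega : p.1 < 2*N+5), ext_lt z (by omega : p.2 < 2*N+5), hzdef,
        EuclideanSpace.single_apply, EuclideanSpace.single_apply]
      by_cases hc : (⟨p.1, by omega⟩ : Fin (2*N+5)) = ⟨0, by omega⟩
      · have hc2 : ¬ ((⟨p.2, by omega⟩ : Fin (2*N+5)) = ⟨0, by omega⟩) := by
          intro h2
          have e1 : p.1 = 0 := congrArg Fin.val hc
          have e2 : p.2 = 0 := congrArg Fin.val h2
          omega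
        rw [if_neg hc2]
        ring
      · rw [if_neg hc]
        ring
    rw [show ext N z p.2 * ext N z p.1 = ext N z p.1 * ext N z p.2 from by ring, h1]
    ring
  have hle := lam_le N z hz
  rw [hQF, zero_div] at hle
  exact hle

lemma lam_tendsto : Filter.Tendsto (fun n : ℕ => lam n) Filter.atTop (nhds (-th)) := by
  have h0 : Filter.Tendsto (fun n : ℕ => (ga⁻¹^2)^n) Filter.atTop (nhds 0) :=
    tendsto_pow_atTop_nhds_zero_of_lt_one (sq_nonneg _) ga_inv_sq_lt_one
  have h1 : Filter.Tendsto (fun n : ℕ => -th + 2*ga⁻¹*(ga⁻¹^2)^n) Filter.atTop (nhds (-th)) := by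
    have h2 := (h0.const_mul (2*ga⁻¹)).const_add (-th)
    simpa using h2
  exact tendsto_of_tendsto_of_tendsto_of_le_of_le tendsto_const_nhds h1
    (fun n => lam_ge n) (fun n => lam_upper n)

/-- the triangle makes the hypergraph non-odd-bipartite -/
lemma HG_not_oddbip (q N : ℕ) (hq : 0 < q) : ¬ (HG q N hq).OddBipartite := by
  rintro ⟨V₁, hV⟩
  have hedge : ∀ a b : ℕ, a < b → (a, b) ∈ GE N →
      Odd ((grp q a ∩ V₁).card + (grp q b ∩ V₁).card) := by
    intro a b hab hmem
    have he : grp q a ∪ grp q b ∈ (HG q N hq).edges := by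
      rw [HG_edges]
      exact Finset.mem_image.mpr ⟨(a, b), hmem, rfl⟩
    have h1 := hV _ he
    rwa [Finset.union_inter_distrib_right, Finset.card_union_of_disjoint
      (Finset.disjoint_of_subset_left (Finset.inter_subset_left)
        (Finset.disjoint_of_subset_right (Finset.inter_subset_left)
          (grp_disj hq (by omega))))] at h1
  have m1 : ((2*N+2 : ℕ), (2*N+3 : ℕ)) ∈ GE N := by
    rw [GE_def]
    simp
  have m2 : ((2*N+3 : ℕ), (2*N+4 : ℕ)) ∈ GE N := by
    rw [GE_def]
    simp
  have m3 : ((2*N+2 : ℕ), (2*N+4 : ℕ)) ∈ GE N := by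
    rw [GE_def]
    simp
  have o1 := hedge _ _ (by omega) m1
  have o2 := hedge _ _ (by omega) m2
  have o3 := hedge _ _ (by omega) m3
  obtain ⟨a1, ha1⟩ := o1
  obtain ⟨a2, ha2⟩ := o2
  obtain ⟨a3, ha3⟩ := o3
  omega

end Stmt19Aux

/-- for even `k ≥ 4`, `-√(2+√5)` is a limit point of the least adjacency
H-eigenvalues of non-odd-bipartite `k`-uniform hypergraphs. -/
theorem stmt19 (k : ℕ) (hk : 4 ≤ k) (hke : Even k) :
    ∃ (H : ℕ → UniformHypergraph k) (lam : ℕ → ℝ),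
      (∀ n : ℕ, ¬ (H n).OddBipartite ∧ (H n).IsAdjHEig (lam n) ∧
        ∀ μ : ℝ, (H n).IsAdjHEig μ → lam n ≤ μ) ∧
      Filter.Tendsto lam Filter.atTop (nhds (-Real.sqrt (2 + Real.sqrt 5))) := by
  open Stmt19Aux in
  obtain ⟨r, rfl⟩ := hke
  have hq2 : 2 ≤ r := by omega
  have hq : 0 < r := by omega
  have hrr : r + r = 2 * r := by ring
  rw [hrr]
  refine ⟨fun n => HG r n hq, fun n => Stmt19Aux.lam n, fun n => ⟨?_, ?_, ?_⟩, ?_⟩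
  · exact HG_not_oddbip r n hq
  · -- lam n is an eigenvalue
    obtain ⟨z, hz, hzeig⟩ := lam_eig n
    apply transfer r n hq2 hq (Stmt19Aux.lam n) (ext n z)
    · intro i hi
      have := hzeig ⟨i, hi⟩
      rw [ext_lt z hi]
      exact this.symm
    · have : ∃ i : Fin (2*n+5), z i ≠ 0 := by
        by_contra hcon
        push_neg at hcon
        apply hz
        ext i
        exact hcon i
      obtain ⟨i, hi⟩ := this
      exact ⟨↑i, i.isLt, by rwa [ext_fin]⟩
  · -- minimality
    intro μ hμ
    obtain ⟨x, hnz, heq⟩ := hμ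
    obtain ⟨h1, h2⟩ := reduce r n hq2 hq μ x heq hnz
    by_cases hmu : μ = 0
    · rw [hmu]
      exact lam_le_zero n
    · obtain ⟨i, hi, hsi⟩ := h2 hmu
      exact lam_min n μ _ h1 ⟨i, hi, hsi⟩
  · exact lam_tendsto
end
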